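/- arXiv:1006.1541 — 7 statements merged into one kernel-verified Lean document; each statement's English description precedes it below -/
import Mathlib

section
/- Let ξ_1, …, ξ_n be nonnegative, independent real random variables, let q ≥ 1 and u > 0. Then P(‖(ξ_1, …, ξ_n)‖_{q,∞} > u) ≤ (2e / u^q) Δ(ξ_1, …, ξ_n), where Δ(ξ_1, …, ξ_n) := sup_{t > 0} ( t^q ∑_{k=1}^n P(ξ_k > t) ). -/
open MeasureTheory ProbabilityTheory Finset

/-- The weak-`ℓ_q` norm of a finite sequence of reals. -/
noncomputable def weakLpNorm (q : ℝ) {n : ℕ} (a : Fin n → ℝ) : ℝ :=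
  ⨆ t : {t : ℝ // 0 < t},
    ((t : ℝ) ^ q * ((Finset.univ.filter fun i => (t : ℝ) < |a i|).card : ℝ)) ^ (1 / q)

/-- `Δ(ξ_1,…,ξ_n) = sup_{t>0} t^q ∑_k P(ξ_k > t)`, computed in `ℝ≥0∞`. -/
noncomputable def weakMomentSup {Ω : Type*} [MeasurableSpace Ω] (μ : Measure Ω) (q : ℝ)
    {n : ℕ} (ξ : Fin n → Ω → ℝ) : ENNReal :=
  ⨆ t : {t : ℝ // 0 < t}, ENNReal.ofReal ((t : ℝ) ^ q) * ∑ k, μ {ω | (t : ℝ) < ξ k ω}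

/-- `m^m ≤ e^m ⬝ m!`. -/
lemma pow_self_le_exp_pow_mul_factorial (m : ℕ) :
    (m : ℝ) ^ m ≤ Real.exp 1 ^ m * m.factorial := by
  have h := Real.sum_le_exp_of_nonneg (x := (m : ℝ)) (Nat.cast_nonneg m) (m + 1)
  have h2 : (m : ℝ) ^ m / m.factorial ≤ Real.exp m := by
    refine le_trans ?_ h
    refine Finset.single_le_sum (f := fun i => (m : ℝ) ^ i / i.factorial) ?_ ?_
    · intro i _; positivity
    · simp
  have hfac : (0 : ℝ) < m.factorial := by exact_mod_cast m.factorial_pos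
  rw [div_le_iff₀ hfac] at h2
  rw [Real.exp_one_pow]
  exact h2

/-- `m! ⬝ e_m(p) ≤ (∑ p)^m` in `ℝ≥0∞`. -/
lemma factorial_mul_esymm_le {n : ℕ} (p : Fin n → ENNReal) (m : ℕ) :
    (m.factorial : ENNReal) *
      ∑ s ∈ Finset.powersetCard m (Finset.univ : Finset (Fin n)), ∏ i ∈ s, p i
      ≤ (∑ i, p i) ^ m := by
  classical
  rw [Finset.sum_pow_eq_sum_piAntidiag]
  set g : Finset (Fin n) → (Fin n → ℕ) := fun s i => if i ∈ s then 1 else 0 with hg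
  have hginj : ∀ s ∈ powersetCard m (univ : Finset (Fin n)),
      ∀ t ∈ powersetCard m (univ : Finset (Fin n)), g s = g t → s = t := by
    intro s _ t _ h
    ext i
    have h' := congrFun h i
    simp only [hg] at h'
    by_cases hs : i ∈ s <;> by_cases ht : i ∈ t <;> simp_all
  have hterm : ∀ s ∈ powersetCard m (univ : Finset (Fin n)),
      (m.factorial : ENNReal) * ∏ i ∈ s, p i
        = (Nat.multinomial univ (g s) : ENNReal) * ∏ i, p i ^ g s i := by
    intro s hs
    have hcard : s.card = m := (Finset.mem_powersetCard.1 hs).2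
    have hsum : ∑ i, g s i = m := by
      simp only [hg, Finset.sum_ite_mem, Finset.univ_inter, Finset.sum_const, smul_eq_mul,
        mul_one, hcard]
    have hprodfact : ∏ i, (g s i).factorial = 1 := by
      apply Finset.prod_eq_one
      intro i _
      by_cases h : i ∈ s <;> simp [hg, h]
    have hmult : Nat.multinomial univ (g s) = m.factorial := by
      have hspec := Nat.multinomial_spec univ (g s)
      rwa [hprodfact, one_mul, hsum] at hspec
    have hprod : ∏ i, p i ^ g s i = ∏ i ∈ s, p i := by
      have : ∀ i ∈ (univ : Finset (Fin n)), p i ^ g s i = if i ∈ s then p i else 1 := by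
        intro i _
        by_cases h : i ∈ s <;> simp [hg, h]
      rw [Finset.prod_congr rfl this, Finset.prod_ite_mem, Finset.univ_inter]
    rw [hmult, hprod]
  rw [Finset.mul_sum, Finset.sum_congr rfl hterm]
  have himg : ∑ k ∈ (Finset.powersetCard m (Finset.univ : Finset (Fin n))).image g,
        ((Nat.multinomial univ k : ENNReal) * ∏ i, p i ^ k i)
      = ∑ s ∈ Finset.powersetCard m (Finset.univ : Finset (Fin n)),
        ((Nat.multinomial univ (g s) : ENNReal) * ∏ i, p i ^ g s i) :=
    Finset.sum_image hginj
  rw [← himg]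
  apply Finset.sum_le_sum_of_subset
  intro k hk
  simp only [Finset.mem_image] at hk
  obtain ⟨s, hs, rfl⟩ := hk
  have hcard : s.card = m := (Finset.mem_powersetCard.1 hs).2
  rw [Finset.mem_piAntidiag]
  refine ⟨?_, fun i _ => Finset.mem_univ i⟩
  simp only [hg, Finset.sum_ite_mem, Finset.univ_inter, Finset.sum_const, smul_eq_mul,
    mul_one, hcard]

/-- Probability that at least `m` of the `ξ i` exceed `t`, bounded via independence. -/
lemma meas_atLeast_le {Ω : Type*} [MeasurableSpace Ω] (μ : Measure Ω)
    {n : ℕ} (ξ : Fin n → Ω → ℝ)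
    (hindep : iIndepFun ξ μ) (t : ℝ) (m : ℕ) :
    μ {ω | m ≤ (Finset.univ.filter fun i => t < ξ i ω).card}
      ≤ ∑ s ∈ Finset.powersetCard m (Finset.univ : Finset (Fin n)),
          ∏ i ∈ s, μ {ω | t < ξ i ω} := by
  classical
  have hsub : {ω | m ≤ (Finset.univ.filter fun i => t < ξ i ω).card}
      ⊆ ⋃ s ∈ Finset.powersetCard m (Finset.univ : Finset (Fin n)),
          ⋂ i ∈ s, {ω | t < ξ i ω} := by
    intro ω hω
    obtain ⟨s, hs, hcard⟩ := Finset.exists_subset_card_eq hω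
    refine Set.mem_biUnion (Finset.mem_coe.2 (Finset.mem_powersetCard.2
      ⟨Finset.subset_univ s, hcard⟩)) ?_
    exact Set.mem_biInter fun i hi => (Finset.mem_filter.1 (hs hi)).2
  refine (measure_mono hsub).trans ?_
  refine (measure_biUnion_finset_le _ _).trans ?_
  apply Finset.sum_le_sum
  intro s _
  exact le_of_eq (hindep.meas_biInter (S := s) (s := fun i => {ω | t < ξ i ω})
    (fun i _ => ⟨Set.Ioi t, measurableSet_Ioi, rfl⟩))

/-- Marcus–Pisier. For nonnegative independent real random variables
`ξ_1,…,ξ_n`, `q ≥ 1` and `u > 0`,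
`P(‖(ξ_1,…,ξ_n)‖_{q,∞} > u) ≤ (2e/u^q) Δ(ξ_1,…,ξ_n)`. -/
theorem weakLpNorm_tail_bound
    {Ω : Type*} [MeasurableSpace Ω] (μ : Measure Ω) [IsProbabilityMeasure μ]
    {n : ℕ} (ξ : Fin n → Ω → ℝ)
    (hnonneg : ∀ k ω, 0 ≤ ξ k ω)
    (hmeas : ∀ k, Measurable (ξ k))
    (hindep : iIndepFun ξ μ)
    (q : ℝ) (hq : 1 ≤ q) (u : ℝ) (hu : 0 < u) :
    μ {ω | u < weakLpNorm q fun k => ξ k ω}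
      ≤ ENNReal.ofReal (2 * Real.exp 1 / u ^ q) * weakMomentSup μ q ξ := by
  classical
  have hq0 : (0 : ℝ) < q := lt_of_lt_of_le one_pos hq
  have huq : (0 : ℝ) < u ^ q := Real.rpow_pos_of_pos hu q
  by_cases hbig : 1 ≤ ENNReal.ofReal (2 * Real.exp 1 / u ^ q) * weakMomentSup μ q ξ
  · exact le_trans prob_le_one hbig
  push_neg at hbig
  set Δ := weakMomentSup μ q ξ with hΔ
  set c : ENNReal := ENNReal.ofReal (Real.exp 1 / u ^ q) with hc
  have hRHS : ENNReal.ofReal (2 * Real.exp 1 / u ^ q) = 2 * c := by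
    rw [hc, mul_div_assoc, ENNReal.ofReal_mul (by norm_num)]
    norm_num
  set r : ENNReal := c * Δ with hr
  have hr2 : r ≤ 2⁻¹ := by
    rw [ENNReal.le_inv_iff_mul_le]
    calc r * 2 = 2 * c * Δ := by ring
    _ ≤ 1 := le_of_lt (hRHS ▸ hbig)
  -- the threshold levels
  set tt : ℕ → ℝ := fun m => u / (m : ℝ) ^ (1 / q) with htt
  have httpos : ∀ j : ℕ, 0 < tt (j + 1) := by
    intro j
    apply div_pos hu
    apply Real.rpow_pos_of_pos
    positivity
  have httq : ∀ j : ℕ, (tt (j + 1)) ^ q = u ^ q / ((j : ℝ) + 1) := by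
    intro j
    have hm : (0 : ℝ) < (j : ℝ) + 1 := by positivity
    rw [htt]
    have hbase : ((j + 1 : ℕ) : ℝ) = (j : ℝ) + 1 := by push_cast; ring
    simp only [hbase]
    rw [Real.div_rpow hu.le (Real.rpow_nonneg hm.le _), ← Real.rpow_mul hm.le,
      one_div_mul_cancel hq0.ne', Real.rpow_one]
  -- events
  set B : ℕ → Set Ω := fun j =>
    {ω | j + 1 ≤ (Finset.univ.filter fun i => tt (j + 1) < ξ i ω).card} with hB
  -- event inclusion
  have hincl : {ω | u < weakLpNorm q fun k => ξ k ω} ⊆ ⋃ j ∈ Finset.range n, B j := by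
    intro ω hω
    simp only [Set.mem_setOf_eq] at hω
    have hne : Nonempty {t : ℝ // 0 < t} := ⟨⟨1, one_pos⟩⟩
    have hex : ∃ t : {t : ℝ // 0 < t},
        u < ((t : ℝ) ^ q *
          ((Finset.univ.filter fun i => (t : ℝ) < |ξ i ω|).card : ℝ)) ^ (1 / q) := by
      by_contra h
      push_neg at h
      exact absurd (ciSup_le h) (not_le.2 hω)
    obtain ⟨⟨t, ht⟩, hlt⟩ := hex
    set N : ℕ := (Finset.univ.filter fun i => t < |ξ i ω|).card with hN
    have hxnn : (0 : ℝ) ≤ t ^ q * N := by positivity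
    have huqN : u ^ q < t ^ q * N := by
      have h1 : u ^ q < ((t ^ q * N) ^ (1 / q)) ^ q :=
        Real.rpow_lt_rpow hu.le hlt hq0
      rwa [← Real.rpow_mul hxnn, one_div_mul_cancel hq0.ne', Real.rpow_one] at h1
    have hN1 : 1 ≤ N := by
      rcases Nat.eq_zero_or_pos N with h0 | h1
      · rw [h0] at huqN; simp at huqN; linarith
      · exact h1
    have hNn : N ≤ n := by
      calc N ≤ (Finset.univ : Finset (Fin n)).card := Finset.card_filter_le _ _
      _ = n := Finset.card_univ.trans (Fintype.card_fin n)
    obtain ⟨j, hj⟩ : ∃ j, N = j + 1 := ⟨N - 1, by omega⟩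
    have hcast : ((j : ℝ) + 1) = (N : ℝ) := by push_cast [hj]; ring
    refine Set.mem_biUnion (Finset.mem_coe.2 (Finset.mem_range.2 (by omega : j < n))) ?_
    -- show tt (j+1) ≤ t
    have httle : tt (j + 1) ≤ t := by
      by_contra h
      push_neg at h
      have h2 : t ^ q < (tt (j + 1)) ^ q := Real.rpow_lt_rpow ht.le h hq0
      have h3 : (tt (j + 1)) ^ q = u ^ q / N := by rw [httq j, hcast]
      have hNpos : (0 : ℝ) < (N : ℝ) := by exact_mod_cast hN1
      rw [h3, lt_div_iff₀ hNpos] at h2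
      -- t^q * N < u^q, contradiction with huqN
      linarith
    -- conclude membership in B j
    have hsub : (Finset.univ.filter fun i => t < |ξ i ω|)
        ⊆ (Finset.univ.filter fun i => tt (j + 1) < ξ i ω) := by
      intro i hi
      rw [Finset.mem_filter] at hi ⊢
      refine ⟨hi.1, ?_⟩
      have := hi.2
      rw [abs_of_nonneg (hnonneg i ω)] at this
      linarith
    have hcard : N ≤ (Finset.univ.filter fun i => tt (j + 1) < ξ i ω).card :=
      hN ▸ Finset.card_le_card hsub
    simp only [hB, Set.mem_setOf_eq]
    omega
  -- per-index bound : μ (B j) ≤ r ^ (j + 1)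
  have hBbound : ∀ j : ℕ, μ (B j) ≤ r ^ (j + 1) := by
    intro j
    set m : ℕ := j + 1 with hm
    set S : ENNReal := ∑ k, μ {ω | tt m < ξ k ω} with hS
    have step1 : μ (B j) ≤ ∑ s ∈ Finset.powersetCard m (Finset.univ : Finset (Fin n)),
        ∏ i ∈ s, μ {ω | tt m < ξ i ω} := meas_atLeast_le μ ξ hindep (tt m) m
    have step2 : (m.factorial : ENNReal) *
        ∑ s ∈ Finset.powersetCard m (Finset.univ : Finset (Fin n)),
          ∏ i ∈ s, μ {ω | tt m < ξ i ω} ≤ S ^ m :=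
      factorial_mul_esymm_le _ m
    -- bound S by Δ
    have step3 : ENNReal.ofReal ((tt m) ^ q) * S ≤ Δ := by
      rw [hΔ, weakMomentSup]
      exact le_iSup (fun t : {t : ℝ // 0 < t} =>
        ENNReal.ofReal ((t : ℝ) ^ q) * ∑ k, μ {ω | (t : ℝ) < ξ k ω}) ⟨tt m, httpos j⟩
    have hmpos : (0 : ℝ) < (j : ℝ) + 1 := by positivity
    have httqpos : (0 : ℝ) < u ^ q / ((j : ℝ) + 1) := by positivity
    have hSle : S ≤ Δ * ENNReal.ofReal (((j : ℝ) + 1) / u ^ q) := by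
      have h4 : S * ENNReal.ofReal ((tt m) ^ q) ≤ Δ := by rwa [mul_comm] at step3
      have h5 : S ≤ Δ / ENNReal.ofReal ((tt m) ^ q) :=
        (ENNReal.le_div_iff_mul_le
          (Or.inl (by rw [httq j]; simp [ENNReal.ofReal_pos, httqpos]))
          (Or.inl ENNReal.ofReal_ne_top)).2 h4
      rwa [div_eq_mul_inv, httq j, ← ENNReal.ofReal_inv_of_pos httqpos,
        inv_div] at h5
    have hcast2 : ((j : ℝ) + 1) = (m : ℝ) := by push_cast [hm]; ring
    -- real-valued estimate
    have hreal : (((j : ℝ) + 1) / u ^ q) ^ m ≤ (Real.exp 1 / u ^ q) ^ m * m.factorial := by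
      rw [div_pow, div_pow, div_mul_eq_mul_div]
      gcongr
      rw [hcast2]; exact pow_self_le_exp_pow_mul_factorial m
    have hS2 : S ^ m ≤ r ^ m * (m.factorial : ENNReal) := by
      calc S ^ m ≤ (Δ * ENNReal.ofReal (((j : ℝ) + 1) / u ^ q)) ^ m :=
            pow_le_pow_left' hSle m
        _ = Δ ^ m * ENNReal.ofReal (((j : ℝ) + 1) / u ^ q) ^ m := mul_pow _ _ _
        _ = Δ ^ m * ENNReal.ofReal ((((j : ℝ) + 1) / u ^ q) ^ m) := by
            rw [ENNReal.ofReal_pow (by positivity)]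
        _ ≤ Δ ^ m * ENNReal.ofReal ((Real.exp 1 / u ^ q) ^ m * m.factorial) :=
            mul_le_mul_right (ENNReal.ofReal_le_ofReal hreal) _
        _ = Δ ^ m * (c ^ m * (m.factorial : ENNReal)) := by
            rw [ENNReal.ofReal_mul (by positivity), ENNReal.ofReal_pow (by positivity),
              ENNReal.ofReal_natCast, hc]
        _ = r ^ m * (m.factorial : ENNReal) := by rw [hr, mul_pow]; ring
    have hfac0 : (m.factorial : ENNReal) ≠ 0 := by
      exact_mod_cast m.factorial_pos.ne'
    have hfact : (m.factorial : ENNReal) ≠ ⊤ := ENNReal.natCast_ne_top _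
    have h6 : (m.factorial : ENNReal) * μ (B j) ≤ (m.factorial : ENNReal) * r ^ m :=
      calc (m.factorial : ENNReal) * μ (B j)
          ≤ (m.factorial : ENNReal) *
              ∑ s ∈ Finset.powersetCard m (Finset.univ : Finset (Fin n)),
                ∏ i ∈ s, μ {ω | tt m < ξ i ω} := mul_le_mul_right step1 _
        _ ≤ S ^ m := step2
        _ ≤ r ^ m * (m.factorial : ENNReal) := hS2
        _ = (m.factorial : ENNReal) * r ^ m := mul_comm _ _
    exact (ENNReal.mul_le_mul_iff_right hfac0 hfact).1 h6
  -- final summation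
  have hsum : μ {ω | u < weakLpNorm q fun k => ξ k ω} ≤ ∑ j ∈ Finset.range n, r ^ (j + 1) :=
    (measure_mono hincl).trans ((measure_biUnion_finset_le _ _).trans
      (Finset.sum_le_sum fun j _ => hBbound j))
  refine hsum.trans ?_
  have hgeom : ∑ j ∈ Finset.range n, r ^ (j + 1) ≤ r * 2 := by
    calc ∑ j ∈ Finset.range n, r ^ (j + 1)
        ≤ ∑ j ∈ Finset.range n, r * 2⁻¹ ^ j := by
          apply Finset.sum_le_sum
          intro j _
          rw [pow_succ']
          exact mul_le_mul_right (pow_le_pow_left' hr2 j) r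
      _ = r * ∑ j ∈ Finset.range n, 2⁻¹ ^ j := by rw [Finset.mul_sum]
      _ ≤ r * ∑' j : ℕ, (2⁻¹ : ENNReal) ^ j := mul_le_mul_right (ENNReal.sum_le_tsum _) r
      _ = r * 2 := by
          rw [ENNReal.tsum_geometric]
          congr 1
          rw [ENNReal.one_sub_inv_two, inv_inv]
  refine hgeom.trans (le_of_eq ?_)
  rw [hRHS, hr]
  ring
end

section
/- Let q > 1 and let ξ_1, …, ξ_n be nonnegative, independent real random variables with Δ := sup_{t > 0} ( t^q ∑_{k=1}^n P(ξ_k > t) ) < ∞. Then E‖(ξ_1, …, ξ_n)‖_{q,∞} ≤ (1 + 2e/(q−1)) Δ^{1/q}. In particular there is a constant c depending only on q with E‖(ξ_1, …, ξ_n)‖_{q,∞} ≤ c Δ^{1/q}. -/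
open MeasureTheory ProbabilityTheory Finset
open scoped ENNReal

lemma two_term_binom (x y : ℝ) (hx : 0 ≤ x) (hy : 0 ≤ y) (j : ℕ) :
    y ^ (j + 1) + (j + 1 : ℝ) * x * y ^ j ≤ (x + y) ^ (j + 1) := by
  induction j with
  | zero => simp; nlinarith
  | succ j ih =>
    have h2 : (x + y) * (y ^ (j + 1) + (j + 1 : ℝ) * x * y ^ j) ≤ (x + y) * (x + y) ^ (j + 1) :=
      mul_le_mul_of_nonneg_left ih (by linarith)
    have hYj : (0:ℝ) ≤ y ^ j := pow_nonneg hy j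
    have expand : (x + y) * (y ^ (j + 1) + (j + 1 : ℝ) * x * y ^ j)
        = y ^ (j + 1 + 1) + ((j:ℝ) + 1 + 1) * x * y ^ (j + 1) + ((j:ℝ)+1) * x^2 * y ^ j := by
      ring
    have h4 : (x + y) * (x + y) ^ (j + 1) = (x + y) ^ (j + 1 + 1) := by ring
    push_cast
    nlinarith [mul_nonneg (mul_nonneg (by positivity : (0:ℝ) ≤ (j:ℝ)+1) (sq_nonneg x)) hYj]

lemma esymm_le {ι : Type*} [DecidableEq ι] (s : Finset ι) (p : ι → ℝ)
    (hp : ∀ i ∈ s, 0 ≤ p i) (m : ℕ) :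
    (m.factorial : ℝ) * ∑ S ∈ s.powersetCard m, ∏ i ∈ S, p i ≤ (∑ i ∈ s, p i) ^ m := by
  induction s using Finset.induction_on generalizing m with
  | empty =>
    cases m with
    | zero => simp
    | succ m =>
      have : (∅ : Finset ι).powersetCard (m+1) = ∅ :=
        Finset.powersetCard_eq_empty.mpr (by simp)
      simp [this]
  | @insert a s ha ih =>
    have hpa : 0 ≤ p a := hp a (mem_insert_self a s)
    have hps : ∀ i ∈ s, 0 ≤ p i := fun i hi => hp i (mem_insert_of_mem hi)
    have hT : 0 ≤ ∑ i ∈ s, p i := Finset.sum_nonneg hps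
    cases m with
    | zero => simp
    | succ j =>
      rw [Finset.powersetCard_succ_insert ha, Finset.sum_union, Finset.sum_image]
      · have himg : ∀ S ∈ s.powersetCard j, ∏ i ∈ insert a S, p i = p a * ∏ i ∈ S, p i := by
          intro S hS
          have : a ∉ S := fun h => ha ((Finset.mem_powersetCard.mp hS).1 h)
          rw [Finset.prod_insert this]
        rw [Finset.sum_congr rfl himg, ← Finset.mul_sum]
        set E := ∑ S ∈ s.powersetCard (j+1), ∏ i ∈ S, p i with hE
        set F := ∑ S ∈ s.powersetCard j, ∏ i ∈ S, p i with hF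
        set T := ∑ i ∈ s, p i with hT'
        have h1 : ((j+1).factorial : ℝ) * E ≤ T ^ (j+1) := ih hps (j+1)
        have h2 : (j.factorial : ℝ) * F ≤ T ^ j := ih hps j
        have hfact : ((j+1).factorial : ℝ) = (j+1) * j.factorial := by
          rw [Nat.factorial_succ]; push_cast; ring
        have hsum : ∑ i ∈ insert a s, p i = p a + T := by
          rw [Finset.sum_insert ha]
        rw [hsum]
        have key : ((j+1).factorial : ℝ) * (E + p a * F)
            ≤ T ^ (j+1) + (j+1 : ℝ) * p a * T ^ j := by
          have expand : ((j+1).factorial : ℝ) * (E + p a * F)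
              = ((j+1).factorial : ℝ) * E + (j+1:ℝ) * p a * ((j.factorial:ℝ) * F) := by
            rw [hfact]; ring
          rw [expand]
          have hj1 : (0:ℝ) ≤ (j+1:ℝ) * p a := by positivity
          nlinarith [mul_le_mul_of_nonneg_left h2 hj1]
        exact key.trans (two_term_binom (p a) T hpa hT j)
      · intro S hS S' hS' hins
        have haS : a ∉ S := fun h => ha ((Finset.mem_powersetCard.mp hS).1 h)
        have haS' : a ∉ S' := fun h => ha ((Finset.mem_powersetCard.mp hS').1 h)
        have := congrArg (Finset.erase · a) hins
        simpa [Finset.erase_insert haS, Finset.erase_insert haS'] using this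
      · rw [Finset.disjoint_left]
        intro S hS hS'
        obtain ⟨S', hS'mem, hSeq⟩ := Finset.mem_image.mp hS'
        have haS : a ∈ S := by rw [← hSeq]; exact Finset.mem_insert_self a S'
        exact ha ((Finset.mem_powersetCard.mp hS).1 haS)

noncomputable def wterm (q : ℝ) {n : ℕ} (a : Fin n → ℝ) (t : ℝ) : ℝ :=
  (t ^ q * ((Finset.univ.filter fun i => t < |a i|).card : ℝ)) ^ (1 / q)

section
variable (q : ℝ) {n : ℕ} (a : Fin n → ℝ)

lemma wterm_nonneg (hq : 0 < q) {t : ℝ} (ht : 0 < t) : 0 ≤ wterm q a t :=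
  Real.rpow_nonneg (by positivity) _

lemma wterm_bdd (hq : 0 < q) :
    ∀ t : ℝ, 0 < t → wterm q a t ≤ ((1 + ∑ i, |a i|) ^ q * n) ^ (1/q) := by
  intro t ht
  set M := 1 + ∑ i, |a i| with hM
  have hM0 : 0 < M := by positivity
  rcases Nat.eq_zero_or_pos (Finset.univ.filter fun i => t < |a i|).card with h0 | h1
  · rw [wterm, h0]
    simp only [Nat.cast_zero, mul_zero]
    rw [Real.zero_rpow (by positivity)]
    positivity
  · obtain ⟨i, hi⟩ := Finset.card_pos.mp h1
    have hti : t < |a i| := (Finset.mem_filter.mp hi).2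
    have htM : t ≤ M := by
      have : |a i| ≤ ∑ j, |a j| := Finset.single_le_sum (f := fun j => |a j|) (fun j _ => abs_nonneg _) (mem_univ i)
      linarith
    apply Real.rpow_le_rpow (by positivity) _ (by positivity)
    apply mul_le_mul (Real.rpow_le_rpow ht.le htM hq.le) _ (by positivity) (by positivity)
    exact_mod_cast (Finset.card_filter_le univ _).trans_eq (Finset.card_fin n)

lemma weakLpNorm_eq_sup_wterm : weakLpNorm q a = ⨆ t : {t : ℝ // 0 < t}, wterm q a t := rfl

lemma weakLpNorm_nonneg (hq : 0 < q) : 0 ≤ weakLpNorm q a :=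
  Real.iSup_nonneg fun t => wterm_nonneg q a hq t.2

lemma rpow_inv_q (hq : 0 < q) {x : ℝ} (hx : 0 ≤ x) : (x ^ (1/q)) ^ q = x := by
  rw [← Real.rpow_mul hx, one_div_mul_cancel hq.ne', Real.rpow_one]

lemma rpow_inv_q' (hq : 0 < q) {x : ℝ} (hx : 0 ≤ x) : (x ^ q) ^ (1/q) = x := by
  rw [← Real.rpow_mul hx, mul_one_div_cancel hq.ne', Real.rpow_one]

lemma weakLpNorm_eq_rat (hq : 0 < q) :
    weakLpNorm q a = ⨆ r : {r : ℚ // 0 < r}, wterm q a (r : ℝ) := by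
  have hbddR : BddAbove (Set.range fun t : {t : ℝ // 0 < t} => wterm q a (t : ℝ)) := by
    refine ⟨((1 + ∑ i, |a i|) ^ q * n) ^ (1/q), ?_⟩
    rintro x ⟨t, rfl⟩; exact wterm_bdd q a hq t t.2
  have hbddQ : BddAbove (Set.range fun r : {r : ℚ // 0 < r} => wterm q a (r : ℝ)) := by
    refine ⟨((1 + ∑ i, |a i|) ^ q * n) ^ (1/q), ?_⟩
    rintro x ⟨r, rfl⟩; exact wterm_bdd q a hq r (by exact_mod_cast r.2)
  rw [weakLpNorm_eq_sup_wterm]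
  apply le_antisymm
  · apply ciSup_le
    rintro ⟨t, ht⟩
    refine le_of_forall_lt fun y hy => (lt_ciSup_iff hbddQ).mpr ?_
    rcases lt_or_ge y 0 with hy0 | hy0
    · exact ⟨⟨1, one_pos⟩, hy0.trans_le (wterm_nonneg q a hq (by norm_num))⟩
    set c := ((Finset.univ.filter fun i => t < |a i|).card : ℝ) with hc
    have hc0 : 0 ≤ c := by positivity
    have hcpos : 0 < c := by
      rcases eq_or_lt_of_le hc0 with hce | h; swap; · exact h
      exfalso
      have : wterm q a t = 0 := by
        rw [wterm, ← hc, ← hce, mul_zero, Real.zero_rpow (by positivity)]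
      rw [this] at hy; linarith
    have h1 : y ^ q < t ^ q * c := by
      have h2 := Real.rpow_lt_rpow hy0 hy hq
      rwa [wterm, ← hc, rpow_inv_q q hq (by positivity)] at h2
    set s := (y ^ q / c) ^ (1/q) with hs
    have hs0 : 0 ≤ s := Real.rpow_nonneg (by positivity) _
    have hsq : s ^ q = y ^ q / c := rpow_inv_q q hq (by positivity)
    have hst : s < t := by
      by_contra hcon
      push_neg at hcon
      have := Real.rpow_le_rpow ht.le hcon hq.le
      rw [hsq] at this
      have := (div_lt_iff₀ hcpos).mpr h1
      linarith
    obtain ⟨r, hr1, hr2⟩ := exists_rat_btwn ((max_lt_iff.mpr ⟨hst, ht⟩) : max s 0 < t)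
    have hr0 : (0:ℝ) < r := (le_max_right s 0).trans_lt hr1
    have hsr : s < r := (le_max_left s 0).trans_lt hr1
    refine ⟨⟨r, by exact_mod_cast hr0⟩, ?_⟩
    have hsub : (Finset.univ.filter fun i => t < |a i|) ⊆
        (Finset.univ.filter fun i => (r:ℝ) < |a i|) := by
      exact Finset.monotone_filter_right _ (fun i _ hi => hr2.trans hi)
    have hcard : c ≤ ((Finset.univ.filter fun i => (r:ℝ) < |a i|).card : ℝ) := by
      rw [hc]; exact_mod_cast Finset.card_le_card hsub
    have h3 : y ^ q < (r:ℝ) ^ q * ((Finset.univ.filter fun i => (r:ℝ) < |a i|).card : ℝ) := by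
      have h4 : s ^ q < (r:ℝ) ^ q := Real.rpow_lt_rpow hs0 hsr hq
      rw [hsq] at h4
      have h5 : y ^ q < (r:ℝ) ^ q * c := by
        rw [div_lt_iff₀ hcpos] at h4; linarith [h4]
      calc y ^ q < (r:ℝ) ^ q * c := h5
        _ ≤ _ := mul_le_mul_of_nonneg_left hcard (by positivity)
    calc y = (y ^ q) ^ (1/q) := (rpow_inv_q' q hq hy0).symm
      _ < _ := Real.rpow_lt_rpow (by positivity) h3 (by positivity)
  · apply ciSup_le
    rintro ⟨r, hr⟩
    exact le_ciSup hbddR ⟨(r : ℝ), by exact_mod_cast hr⟩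

end

lemma measurable_card {Ω : Type*} [MeasurableSpace Ω] {n : ℕ} (ξ : Fin n → Ω → ℝ)
    (hmeas : ∀ k, Measurable (ξ k)) (t : ℝ) :
    Measurable (fun ω => ((Finset.univ.filter fun i => t < |ξ i ω|).card : ℝ)) := by
  have heq : (fun ω => ((Finset.univ.filter fun i => t < |ξ i ω|).card : ℝ))
      = fun ω => ∑ i, if t < |ξ i ω| then (1:ℝ) else 0 := by
    funext ω
    rw [Finset.card_filter]
    push_cast
    simp
  rw [heq]
  apply Finset.measurable_sum
  intro i _
  exact Measurable.ite (measurableSet_lt measurable_const (hmeas i).abs)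
    measurable_const measurable_const

lemma weakLpNorm_measurable {Ω : Type*} [MeasurableSpace Ω] {n : ℕ} (ξ : Fin n → Ω → ℝ)
    (hmeas : ∀ k, Measurable (ξ k)) (q : ℝ) (hq : 0 < q) :
    Measurable (fun ω => weakLpNorm q (fun k => ξ k ω)) := by
  have : (fun ω => weakLpNorm q (fun k => ξ k ω))
      = fun ω => ⨆ r : {r : ℚ // 0 < r}, wterm q (fun k => ξ k ω) (r : ℝ) := by
    funext ω; exact weakLpNorm_eq_rat q _ hq
  rw [this]
  apply Measurable.iSup
  intro r
  unfold wterm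
  exact ((measurable_card ξ hmeas _).const_mul _).pow measurable_const

lemma exists_level (q : ℝ) (hq : 0 < q) {n : ℕ} (a : Fin n → ℝ) {u : ℝ} (hu : 0 < u)
    (h : u < weakLpNorm q a) :
    ∃ m ∈ Finset.Icc 1 n,
      (m : ℝ) ≤ ((Finset.univ.filter fun i => (u / (m:ℝ)^(1/q)) < |a i|).card : ℝ) := by
  obtain ⟨⟨t, ht⟩, hlt⟩ := exists_lt_of_lt_ciSup h
  set c := (Finset.univ.filter fun i => t < |a i|).card with hc
  have huq : u ^ q < t ^ q * c := by
    have h2 := Real.rpow_lt_rpow hu.le hlt hq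
    rwa [← Real.rpow_mul (by positivity), one_div_mul_cancel hq.ne', Real.rpow_one] at h2
  have hc1 : 1 ≤ c := by
    by_contra hcon
    push_neg at hcon
    interval_cases c
    · simp at huq
      have : (0:ℝ) < u ^ q := Real.rpow_pos_of_pos hu q
      linarith
  have hcn : c ≤ n := (Finset.card_filter_le univ _).trans_eq (Finset.card_fin n)
  refine ⟨c, Finset.mem_Icc.mpr ⟨hc1, hcn⟩, ?_⟩
  have hcpos : (0:ℝ) < c := by exact_mod_cast hc1
  set tm := u / (c:ℝ)^(1/q) with htm
  have htm_lt : tm < t := by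
    rw [htm, div_lt_iff₀ (by positivity)]
    -- u < t * c^(1/q)
    have h3 : u ^ q < (t * (c:ℝ)^(1/q)) ^ q := by
      rw [Real.mul_rpow ht.le (by positivity), ← Real.rpow_mul (by positivity),
        one_div_mul_cancel hq.ne', Real.rpow_one]
      exact huq
    by_contra hcon
    push_neg at hcon
    have := Real.rpow_le_rpow (by positivity) hcon hq.le
    linarith
  have hsub : (Finset.univ.filter fun i => t < |a i|) ⊆
      (Finset.univ.filter fun i => tm < |a i|) :=
    Finset.monotone_filter_right _ (fun i _ hi => htm_lt.trans hi)
  calc ((c:ℕ) : ℝ) ≤ ((Finset.univ.filter fun i => tm < |a i|).card : ℝ) := by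
        exact_mod_cast Finset.card_le_card hsub
    _ = _ := rfl

section
variable {Ω : Type*} [MeasurableSpace Ω] (μ : Measure Ω) [IsProbabilityMeasure μ]
    {n : ℕ} (ξ : Fin n → Ω → ℝ) (q : ℝ)

lemma sum_tail_le (hΔ : weakMomentSup μ q ξ ≠ ⊤) {t : ℝ} (ht : 0 < t) :
    t ^ q * ∑ i, (μ {ω | t < ξ i ω}).toReal ≤ (weakMomentSup μ q ξ).toReal := by
  have key : ENNReal.ofReal (t ^ q) * ∑ k, μ {ω | t < ξ k ω} ≤ weakMomentSup μ q ξ :=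
    le_iSup (fun s : {t : ℝ // 0 < t} =>
      ENNReal.ofReal ((s : ℝ) ^ q) * ∑ k, μ {ω | (s : ℝ) < ξ k ω}) ⟨t, ht⟩
  have := ENNReal.toReal_mono hΔ key
  rwa [ENNReal.toReal_mul, ENNReal.toReal_ofReal (by positivity),
    ENNReal.toReal_sum (fun i _ => measure_ne_top μ _)] at this

lemma count_tail_le (hmeas : ∀ k, Measurable (ξ k))
    (hindep : iIndepFun ξ μ) (t : ℝ) (m : ℕ) :
    μ {ω | (m : ℝ) ≤ ((Finset.univ.filter fun i => t < ξ i ω).card : ℝ)}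
      ≤ ENNReal.ofReal ((∑ i, (μ {ω | t < ξ i ω}).toReal) ^ m / m.factorial) := by
  set p : Fin n → ℝ := fun i => (μ {ω | t < ξ i ω}).toReal with hp
  have hpnn : ∀ i ∈ (univ : Finset (Fin n)), 0 ≤ p i := fun i _ => ENNReal.toReal_nonneg
  have hincl : {ω | (m : ℝ) ≤ ((Finset.univ.filter fun i => t < ξ i ω).card : ℝ)}
      ⊆ ⋃ S ∈ (univ : Finset (Fin n)).powersetCard m, ⋂ i ∈ S, {ω | t < ξ i ω} := by
    intro ω hω
    simp only [Set.mem_setOf_eq] at hω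
    have hcard : m ≤ (Finset.univ.filter fun i => t < ξ i ω).card := by exact_mod_cast hω
    obtain ⟨S, hSsub, hScard⟩ := Finset.exists_subset_card_eq hcard
    simp only [Set.mem_iUnion]
    refine ⟨S, Finset.mem_powersetCard.mpr ⟨hSsub.trans (Finset.filter_subset _ _), hScard⟩, ?_⟩
    simp only [Set.mem_iInter]
    intro i hi
    exact (Finset.mem_filter.mp (hSsub hi)).2
  have hprod : ∀ S : Finset (Fin n),
      μ (⋂ i ∈ S, {ω | t < ξ i ω}) = ∏ i ∈ S, μ {ω | t < ξ i ω} := by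
    intro S
    have := hindep.measure_inter_preimage_eq_mul S
      (sets := fun _ => Set.Ioi t) (fun i _ => measurableSet_Ioi)
    exact this
  calc μ _ ≤ μ (⋃ S ∈ (univ : Finset (Fin n)).powersetCard m, ⋂ i ∈ S, {ω | t < ξ i ω}) :=
        measure_mono hincl
    _ ≤ ∑ S ∈ (univ : Finset (Fin n)).powersetCard m, μ (⋂ i ∈ S, {ω | t < ξ i ω}) :=
        measure_biUnion_finset_le _ _
    _ = ∑ S ∈ (univ : Finset (Fin n)).powersetCard m, ∏ i ∈ S, μ {ω | t < ξ i ω} := by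
        exact Finset.sum_congr rfl fun S _ => hprod S
    _ = ENNReal.ofReal (∑ S ∈ (univ : Finset (Fin n)).powersetCard m, ∏ i ∈ S, p i) := by
        rw [ENNReal.ofReal_sum_of_nonneg
          (fun S _ => Finset.prod_nonneg fun i _ => hpnn i (mem_univ i))]
        refine Finset.sum_congr rfl fun S _ => ?_
        rw [← ENNReal.toReal_prod, ENNReal.ofReal_toReal]
        exact (ENNReal.prod_lt_top (fun i _ => measure_lt_top μ _)).ne
    _ ≤ ENNReal.ofReal ((∑ i, p i) ^ m / m.factorial) := by
        apply ENNReal.ofReal_le_ofReal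
        rw [le_div_iff₀ (by positivity : (0:ℝ) < (m.factorial : ℝ))]
        calc (∑ S ∈ (univ : Finset (Fin n)).powersetCard m, ∏ i ∈ S, p i) * m.factorial
            = (m.factorial : ℝ) * ∑ S ∈ (univ : Finset (Fin n)).powersetCard m, ∏ i ∈ S, p i := by ring
          _ ≤ _ := esymm_le univ p hpnn m
end

lemma geom_two_le (r : ℝ) (h0 : 0 ≤ r) (h : r ≤ 1/2) (n : ℕ) :
    ∑ k ∈ Finset.range n, r ^ k ≤ 2 := by
  induction n with
  | zero => norm_num
  | succ n ih =>
    rw [geom_sum_succ]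
    nlinarith

lemma geom_tail_le (r : ℝ) (h0 : 0 ≤ r) (h : r ≤ 1/2) (n : ℕ) :
    ∑ m ∈ Finset.Icc 1 n, r ^ m ≤ 2 * r := by
  have : ∑ m ∈ Finset.Icc 1 n, r ^ m = r * ∑ k ∈ Finset.range n, r ^ k := by
    have hmap : Finset.Icc 1 n
        = (Finset.range n).map ⟨fun k => k + 1, fun a b h => Nat.succ_injective h⟩ := by
      ext x
      simp only [Finset.mem_Icc, Finset.mem_map, Function.Embedding.coeFn_mk, Finset.mem_range]
      constructor
      · rintro ⟨h1, h2⟩; exact ⟨x - 1, by omega, by change x - 1 + 1 = x; omega⟩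
      · rintro ⟨a, ha, rfl⟩; change 1 ≤ a + 1 ∧ a + 1 ≤ n; omega
    rw [Finset.mul_sum, hmap, Finset.sum_map]
    refine Finset.sum_congr rfl fun k _ => ?_
    change r ^ (k + 1) = r * r ^ k
    rw [pow_succ]
    ring
  rw [this]
  nlinarith [geom_two_le r h0 h n]

section
variable {Ω : Type*} [MeasurableSpace Ω] (μ : Measure Ω) [IsProbabilityMeasure μ]
    {n : ℕ} (ξ : Fin n → Ω → ℝ)

lemma tail_bound (hnonneg : ∀ k ω, 0 ≤ ξ k ω) (hmeas : ∀ k, Measurable (ξ k))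
    (hindep : iIndepFun ξ μ) (q : ℝ) (hq : 1 < q)
    (hΔ : weakMomentSup μ q ξ ≠ ⊤) {u : ℝ} (hu : 0 < u) :
    μ {ω | u < weakLpNorm q (fun k => ξ k ω)}
      ≤ ENNReal.ofReal (2 * Real.exp 1 * (weakMomentSup μ q ξ).toReal / u ^ q) := by
  set D := (weakMomentSup μ q ξ).toReal with hD
  have hD0 : 0 ≤ D := ENNReal.toReal_nonneg
  have hq0 : 0 < q := by linarith
  have huq : (0:ℝ) < u ^ q := Real.rpow_pos_of_pos hu q
  have he1 : (1:ℝ) ≤ Real.exp 1 := by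
    have := Real.add_one_le_exp 1; linarith
  rcases le_or_gt 1 (2 * Real.exp 1 * D / u ^ q) with hbig | hsmall
  · calc μ _ ≤ 1 := prob_le_one
      _ ≤ _ := ENNReal.one_le_ofReal.mpr hbig
  -- small case
  set r := Real.exp 1 * D / u ^ q with hr
  have hr0 : 0 ≤ r := by positivity
  have hr2 : r ≤ 1/2 := by
    rw [hr]; rw [div_le_iff₀ huq]
    rw [div_lt_iff₀ huq] at hsmall
    linarith
  -- inclusion into union of count events
  set tm : ℕ → ℝ := fun m => u / (m:ℝ) ^ (1/q) with htm
  have hincl : {ω | u < weakLpNorm q (fun k => ξ k ω)}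
      ⊆ ⋃ m ∈ Finset.Icc 1 n,
          {ω | (m : ℝ) ≤ ((Finset.univ.filter fun i => tm m < ξ i ω).card : ℝ)} := by
    intro ω hω
    obtain ⟨m, hm, hcard⟩ := exists_level q hq0 (fun k => ξ k ω) hu hω
    simp only [Set.mem_iUnion]
    refine ⟨m, hm, ?_⟩
    have habs : ∀ i, |ξ i ω| = ξ i ω := fun i => abs_of_nonneg (hnonneg i ω)
    simp only [Set.mem_setOf_eq, htm]
    simpa [habs] using hcard
  -- each count event
  have hcount : ∀ m ∈ Finset.Icc 1 n,
      μ {ω | (m : ℝ) ≤ ((Finset.univ.filter fun i => tm m < ξ i ω).card : ℝ)}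
        ≤ ENNReal.ofReal (r ^ m) := by
    intro m hm
    obtain ⟨hm1, hmn⟩ := Finset.mem_Icc.mp hm
    have hmR : (1:ℝ) ≤ (m:ℝ) := by exact_mod_cast hm1
    have hmpos : (0:ℝ) < (m:ℝ) := by linarith
    have htm_pos : 0 < tm m := by
      rw [htm]; positivity
    have htmq : tm m ^ q = u ^ q / (m:ℝ) := by
      rw [htm, Real.div_rpow hu.le (by positivity), ← Real.rpow_mul hmpos.le,
        one_div_mul_cancel hq0.ne', Real.rpow_one]
    set S := ∑ i, (μ {ω | tm m < ξ i ω}).toReal with hSdef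
    have hSnn : 0 ≤ S := Finset.sum_nonneg fun i _ => ENNReal.toReal_nonneg
    have hS : S ≤ D * m / u ^ q := by
      have h := sum_tail_le μ ξ q hΔ htm_pos
      rw [htmq, div_mul_eq_mul_div, div_le_iff₀ hmpos] at h
      rw [le_div_iff₀ huq]
      linarith
    have hfm : (0:ℝ) < (m.factorial : ℝ) := by positivity
    have hmm : ((m:ℝ)) ^ m ≤ (m.factorial : ℝ) * Real.exp 1 ^ m := by
      have h1 : ((m:ℝ)) ^ m / m.factorial ≤ Real.exp m := by
        have h2 := Real.sum_le_exp_of_nonneg (by positivity : (0:ℝ) ≤ (m:ℝ)) (m+1)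
        refine le_trans ?_ h2
        exact Finset.single_le_sum (f := fun i => (m:ℝ) ^ i / i.factorial)
          (fun i _ => by positivity) (Finset.self_mem_range_succ m)
      have h3 : Real.exp ((m:ℝ)) = Real.exp 1 ^ m := by
        rw [show ((m:ℝ)) = (m:ℝ) * 1 by ring, Real.exp_nat_mul]
      rw [div_le_iff₀ hfm, h3] at h1
      linarith
    have hkey : S ^ m / m.factorial ≤ r ^ m := by
      rw [div_le_iff₀ hfm]
      have c1 : S ^ m ≤ (D / u ^ q * m) ^ m := by
        apply pow_le_pow_left₀ hSnn
        rw [div_mul_eq_mul_div]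
        exact hS
      have c2 : (D / u ^ q * m) ^ m = (D / u ^ q) ^ m * (m:ℝ) ^ m := mul_pow _ _ m
      have c3 : (D / u ^ q) ^ m * (m:ℝ) ^ m
          ≤ (D / u ^ q) ^ m * ((m.factorial : ℝ) * Real.exp 1 ^ m) :=
        mul_le_mul_of_nonneg_left hmm (by positivity)
      have c4 : (D / u ^ q) ^ m * ((m.factorial : ℝ) * Real.exp 1 ^ m)
          = r ^ m * m.factorial := by
        rw [hr, show Real.exp 1 * D / u ^ q = D / u ^ q * Real.exp 1 by ring, mul_pow]
        ring
      calc S ^ m ≤ (D / u ^ q * m) ^ m := c1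
        _ = (D / u ^ q) ^ m * (m:ℝ) ^ m := c2
        _ ≤ _ := c3
        _ = r ^ m * m.factorial := c4
    calc μ _ ≤ ENNReal.ofReal (S ^ m / m.factorial) := count_tail_le μ ξ hmeas hindep _ m
      _ ≤ ENNReal.ofReal (r ^ m) := ENNReal.ofReal_le_ofReal hkey
  -- assemble
  calc μ {ω | u < weakLpNorm q (fun k => ξ k ω)}
      ≤ μ (⋃ m ∈ Finset.Icc 1 n,
          {ω | (m : ℝ) ≤ ((Finset.univ.filter fun i => tm m < ξ i ω).card : ℝ)}) :=
        measure_mono hincl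
    _ ≤ ∑ m ∈ Finset.Icc 1 n,
          μ {ω | (m : ℝ) ≤ ((Finset.univ.filter fun i => tm m < ξ i ω).card : ℝ)} :=
        measure_biUnion_finset_le _ _
    _ ≤ ∑ m ∈ Finset.Icc 1 n, ENNReal.ofReal (r ^ m) :=
        Finset.sum_le_sum hcount
    _ = ENNReal.ofReal (∑ m ∈ Finset.Icc 1 n, r ^ m) :=
        (ENNReal.ofReal_sum_of_nonneg (fun m _ => by positivity)).symm
    _ ≤ ENNReal.ofReal (2 * r) :=
        ENNReal.ofReal_le_ofReal (geom_tail_le r hr0 hr2 n)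
    _ = _ := by rw [hr]; congr 1; ring
end

/-- For `q > 1` and nonnegative independent real random variables with
`Δ = sup_{t>0} t^q ∑_k P(ξ_k > t) < ∞`, one has
`E‖(ξ_1,…,ξ_n)‖_{q,∞} ≤ (1 + 2e/(q−1)) Δ^{1/q}`. -/
theorem weakLpNorm_expectation_bound
    {Ω : Type*} [MeasurableSpace Ω] (μ : Measure Ω) [IsProbabilityMeasure μ]
    {n : ℕ} (ξ : Fin n → Ω → ℝ)
    (hnonneg : ∀ k ω, 0 ≤ ξ k ω)
    (hmeas : ∀ k, Measurable (ξ k))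
    (hindep : iIndepFun ξ μ)
    (q : ℝ) (hq : 1 < q)
    (hΔ : weakMomentSup μ q ξ ≠ ⊤) :
    ∫ ω, weakLpNorm q (fun k => ξ k ω) ∂μ
      ≤ (1 + 2 * Real.exp 1 / (q - 1)) * (weakMomentSup μ q ξ).toReal ^ (1 / q) := by
  have hq0 : 0 < q := by linarith
  have hq1 : 0 < q - 1 := by linarith
  set e := Real.exp 1 with he
  have he1 : (1:ℝ) ≤ e := by have := Real.add_one_le_exp 1; rw [he]; linarith
  set D := (weakMomentSup μ q ξ).toReal with hD
  have hD0 : 0 ≤ D := ENNReal.toReal_nonneg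
  set a := D ^ (1/q) with ha
  have ha0 : 0 ≤ a := Real.rpow_nonneg hD0 _
  set c := 2 * e * D with hc
  have hc0 : 0 ≤ c := by positivity
  set W := fun ω => weakLpNorm q (fun k => ξ k ω) with hW
  have hWnn : ∀ ω, 0 ≤ W ω := fun ω => weakLpNorm_nonneg q _ hq0
  have hWmeas : Measurable W := weakLpNorm_measurable ξ hmeas q hq0
  have hcoef : (0:ℝ) < 1 + 2 * e / (q - 1) := by
    have h2 : 0 < 2 * e / (q - 1) := by positivity
    linarith
  set R := (1 + 2 * e / (q - 1)) * a with hR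
  have hR0 : 0 ≤ R := mul_nonneg hcoef.le ha0
  -- the second integrand
  set f2 : ℝ → ℝ≥0∞ := fun u => ENNReal.ofReal (c * u ^ (-q)) with hf2
  have hf2meas : Measurable f2 := by
    apply Measurable.ennreal_ofReal
    exact (measurable_id.pow measurable_const).const_mul _
  set g : ℝ → ℝ≥0∞ := fun u => (Set.Ioc 0 a).indicator (fun _ => 1) u
      + (Set.Ioi a).indicator f2 u with hg
  have hg1meas : Measurable fun u => (Set.Ioc (0:ℝ) a).indicator (fun _ => (1:ℝ≥0∞)) u :=
    measurable_const.indicator measurableSet_Ioc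
  have hgmeas : Measurable g :=
    hg1meas.add (hf2meas.indicator measurableSet_Ioi)
  have hbound : ∀ u ∈ Set.Ioi (0:ℝ), μ {ω | u < W ω} ≤ g u := by
    intro u hu
    rcases le_or_gt u a with hua | hua
    · have h1 : (Set.Ioc 0 a).indicator (fun _ => (1:ℝ≥0∞)) u = 1 :=
        Set.indicator_of_mem (Set.mem_Ioc.mpr ⟨hu, hua⟩) _
      calc μ _ ≤ 1 := prob_le_one
        _ ≤ g u := by rw [hg]; simp only [h1]; exact le_self_add
    · have h2 : (Set.Ioi a).indicator f2 u = f2 u := Set.indicator_of_mem hua _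
      have h3 : μ {ω | u < W ω} ≤ f2 u := by
        have hu0 : (0:ℝ) < u := hu
        have harg : c * u ^ (-q) = 2 * e * D / u ^ q := by
          rw [Real.rpow_neg (le_of_lt hu0), hc]
          ring
        have h4 := tail_bound μ ξ hnonneg hmeas hindep q hq hΔ (u := u) hu0
        rw [← hD, ← he] at h4
        rw [hf2]
        simpa [harg] using h4
      calc μ {ω | u < W ω} ≤ f2 u := h3
        _ ≤ g u := by rw [hg]; simp only [h2]; exact le_add_self
  have key : ∫⁻ ω, ENNReal.ofReal (W ω) ∂μ ≤ ENNReal.ofReal R := by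
    rw [lintegral_eq_lintegral_meas_lt μ (Filter.Eventually.of_forall hWnn) hWmeas.aemeasurable]
    have step1 : ∫⁻ u in Set.Ioi 0, μ {ω | u < W ω} ≤ ∫⁻ u in Set.Ioi 0, g u :=
      setLIntegral_mono hgmeas hbound
    have step2 : ∫⁻ u in Set.Ioi (0:ℝ), g u ≤ ∫⁻ u, g u := setLIntegral_le_lintegral _ _
    have step3 : ∫⁻ u, g u = ENNReal.ofReal a + ∫⁻ u in Set.Ioi a, f2 u := by
      rw [hg, lintegral_add_left hg1meas, lintegral_indicator measurableSet_Ioi,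
        lintegral_indicator measurableSet_Ioc]
      congr 1
      rw [setLIntegral_const, Real.volume_Ioc, one_mul, sub_zero]
    have step4 : ∫⁻ u in Set.Ioi a, f2 u ≤ ENNReal.ofReal (2 * e * a / (q - 1)) := by
      rcases eq_or_lt_of_le hD0 with hDz | hDpos
      · have haz : a = 0 := by rw [ha, ← hDz, Real.zero_rpow (by positivity)]
        have hcz : c = 0 := by rw [hc, ← hDz, mul_zero]
        have : ∀ u, f2 u = 0 := by
          intro u; rw [hf2]; simp [hcz]
        simp only [this]
        rw [lintegral_zero]
        exact zero_le
      · have hapos : 0 < a := Real.rpow_pos_of_pos hDpos _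
        have hint : IntegrableOn (fun u : ℝ => c * u ^ (-q)) (Set.Ioi a) := by
          exact (integrableOn_Ioi_rpow_of_lt (by linarith) hapos).const_mul c
        have hnn : 0 ≤ᵐ[volume.restrict (Set.Ioi a)] fun u : ℝ => c * u ^ (-q) := by
          filter_upwards [self_mem_ae_restrict measurableSet_Ioi] with u hu
          exact mul_nonneg hc0 (Real.rpow_nonneg (le_of_lt (hapos.trans hu)) _)
        rw [hf2, ← ofReal_integral_eq_lintegral_ofReal hint hnn]
        apply ENNReal.ofReal_le_ofReal
        rw [MeasureTheory.integral_const_mul, integral_Ioi_rpow_of_lt (by linarith) hapos]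
        have hdiv : -a ^ (-q + 1) / (-q + 1) = a ^ (1 - q) / (q - 1) := by
          rw [div_eq_div_iff (by linarith) (by linarith)]
          ring_nf
        have haq : a ^ q * a ^ (1 - q) = a := by
          rw [← Real.rpow_add hapos]; norm_num
        have hDa : D = a ^ q := by
          rw [ha, ← Real.rpow_mul hD0, one_div_mul_cancel hq0.ne', Real.rpow_one]
        rw [hdiv, hc, hDa]
        rw [show 2 * e * a ^ q * (a ^ (1 - q) / (q - 1)) = 2 * e * (a ^ q * a ^ (1-q)) / (q-1)
          from by ring, haq]
    calc ∫⁻ u in Set.Ioi 0, μ {ω | u < W ω} ≤ ∫⁻ u, g u := step1.trans step2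
      _ ≤ ENNReal.ofReal a + ENNReal.ofReal (2 * e * a / (q - 1)) := by
          rw [step3]; exact add_le_add le_rfl step4
      _ = ENNReal.ofReal (a + 2 * e * a / (q - 1)) := by
          rw [ENNReal.ofReal_add ha0 (by positivity)]
      _ = ENNReal.ofReal R := by
          rw [hR]; congr 1; field_simp
  rw [integral_eq_lintegral_of_nonneg_ae (Filter.Eventually.of_forall hWnn)
    hWmeas.aestronglyMeasurable]
  calc (∫⁻ ω, ENNReal.ofReal (W ω) ∂μ).toReal ≤ (ENNReal.ofReal R).toReal :=
      ENNReal.toReal_mono ENNReal.ofReal_ne_top key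
    _ = R := ENNReal.toReal_ofReal hR0
end

section
/- Let 1 < p < q, and let g : (0, ∞) → [0, 1] be a nonincreasing function with g(t) > 0 for all t > 0, sup_{t>0} t^p g(t) ≤ 1, and ∫_0^∞ g(t)^{1/p} dt < ∞. For n ≥ 1 set v_n := inf{ t > 0 : g(t) ≤ 1/n }. Then ∑_{n=1}^∞ n^{−(1 + 1/p − 1/q)} ∫_0^{v_n} g(u)^{1/q} du < ∞. -/
open MeasureTheory Filter

private lemma aux_step {δ x : ℝ} (hδ : 0 < δ) (hx : 1 ≤ x) :
    δ * (x + 1) ^ (-(1 + δ)) ≤ x ^ (-δ) - (x + 1) ^ (-δ) := by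
  have hx0 : 0 < x := lt_of_lt_of_le one_pos hx
  have hx1 : 0 < x + 1 := by linarith
  have hmem : (0 : ℝ) ∉ Set.uIcc x (x + 1) := by
    rw [Set.uIcc_of_le (by linarith)]
    rintro ⟨h1, _⟩; linarith
  have hval : ∫ t in x..(x + 1), t ^ (-(1 + δ)) =
      ((x + 1) ^ (-(1 + δ) + 1) - x ^ (-(1 + δ) + 1)) / (-(1 + δ) + 1) :=
    integral_rpow (Or.inr ⟨by intro h; have h' := neg_injective h; linarith, hmem⟩)
  have he : -(1 + δ) + 1 = -δ := by ring
  rw [he] at hval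
  have hlow : (x + 1) ^ (-(1 + δ)) ≤ ∫ t in x..(x + 1), t ^ (-(1 + δ)) := by
    have hconst : ∫ _t in x..(x + 1), (x + 1) ^ (-(1 + δ)) = (x + 1) ^ (-(1 + δ)) := by
      rw [intervalIntegral.integral_const]; simp
    rw [← hconst]
    apply intervalIntegral.integral_mono_on (by linarith)
      (intervalIntegrable_const) (intervalIntegral.intervalIntegrable_rpow (Or.inr hmem))
    intro t ht
    exact Real.rpow_le_rpow_of_nonpos (lt_of_lt_of_le hx0 ht.1) ht.2 (by linarith)
  rw [hval] at hlow
  have hδ' : δ ≠ 0 := ne_of_gt hδ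
  have hrw : ((x + 1) ^ (-δ) - x ^ (-δ)) / -δ = (x ^ (-δ) - (x + 1) ^ (-δ)) / δ := by
    rw [div_neg, ← neg_div, neg_sub]
  rw [hrw] at hlow
  calc δ * (x + 1) ^ (-(1 + δ)) ≤ δ * ((x ^ (-δ) - (x + 1) ^ (-δ)) / δ) :=
        mul_le_mul_of_nonneg_left hlow hδ.le
    _ = x ^ (-δ) - (x + 1) ^ (-δ) := by
        rw [mul_div_assoc', mul_div_cancel_left₀ _ hδ']

private lemma tail_sum {δ : ℝ} (hδ : 0 < δ) (k N : ℕ) :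
    ∑ n ∈ Finset.Ico k N, ((n : ℝ) + 1) ^ (-(1 + δ)) ≤ (1 + 1 / δ) * ((k : ℝ) + 1) ^ (-δ) := by
  have hk1 : (1 : ℝ) ≤ (k : ℝ) + 1 := by
    have := Nat.cast_nonneg (α := ℝ) k; linarith
  have hrhs0 : (0 : ℝ) ≤ (1 + 1 / δ) * ((k : ℝ) + 1) ^ (-δ) := by positivity
  rcases le_or_gt N k with h | h
  · rw [Finset.Ico_eq_empty (by omega)]; simpa using hrhs0
  · rw [Finset.sum_eq_sum_Ico_succ_bot h]
    set φ : ℕ → ℝ := fun i => ((k : ℝ) + 1 + i) ^ (-δ) with hφ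
    have hterm1 : ((k : ℝ) + 1) ^ (-(1 + δ)) ≤ ((k : ℝ) + 1) ^ (-δ) :=
      Real.rpow_le_rpow_of_exponent_le hk1 (by linarith)
    have hrest : ∑ n ∈ Finset.Ico (k + 1) N, ((n : ℝ) + 1) ^ (-(1 + δ)) ≤
        (1 / δ) * ((k : ℝ) + 1) ^ (-δ) := by
      rw [Finset.sum_Ico_eq_sum_range]
      have hstep : ∀ i ∈ Finset.range (N - (k + 1)),
          (((k + 1 + i : ℕ) : ℝ) + 1) ^ (-(1 + δ)) ≤ (1 / δ) * (φ i - φ (i + 1)) := by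
        intro i _
        have hx : (1 : ℝ) ≤ (k : ℝ) + 1 + i := by
          have := Nat.cast_nonneg (α := ℝ) k
          have := Nat.cast_nonneg (α := ℝ) i
          linarith
        have h := aux_step hδ hx
        have hc1 : ((k + 1 + i : ℕ) : ℝ) + 1 = (k : ℝ) + 1 + i + 1 := by push_cast; ring
        have hc2 : φ (i + 1) = ((k : ℝ) + 1 + i + 1) ^ (-δ) := by
          simp only [hφ]; congr 1; push_cast; ring
        have hc3 : φ i = ((k : ℝ) + 1 + i) ^ (-δ) := rfl
        rw [hc1, hc2, hc3]
        have h5 := mul_le_mul_of_nonneg_left h (le_of_lt (one_div_pos.mpr hδ))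
        have h4 : 1 / δ * (δ * (((k : ℝ) + 1 + i + 1) ^ (-(1 + δ))))
            = ((k : ℝ) + 1 + i + 1) ^ (-(1 + δ)) := by
          field_simp
        linarith
      calc ∑ i ∈ Finset.range (N - (k + 1)), (((k + 1 + i : ℕ) : ℝ) + 1) ^ (-(1 + δ))
          ≤ ∑ i ∈ Finset.range (N - (k + 1)), (1 / δ) * (φ i - φ (i + 1)) :=
            Finset.sum_le_sum hstep
        _ = (1 / δ) * (φ 0 - φ (N - (k + 1))) := by
            rw [← Finset.mul_sum, Finset.sum_range_sub']
        _ ≤ (1 / δ) * φ 0 := by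
            have : (0 : ℝ) ≤ φ (N - (k + 1)) := by
              apply Real.rpow_nonneg; positivity
            have h1δ : (0 : ℝ) < 1 / δ := one_div_pos.mpr hδ
            nlinarith
        _ = (1 / δ) * ((k : ℝ) + 1) ^ (-δ) := by simp [hφ]
    linarith

/-- Let `1 < p < q` and let `g : (0,∞) → [0,1]` be nonincreasing and positive
with `sup_{t>0} t^p g(t) ≤ 1` and `∫_0^∞ g^{1/p} < ∞`. With truncation levels
`v_n = inf{t > 0 : g(t) ≤ 1/n}`, the series
`∑_n n^{-(1+1/p-1/q)} ∫_0^{v_n} g(u)^{1/q} du` converges. -/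
theorem truncated_series_summable
    (p q : ℝ) (hp : 1 < p) (hpq : p < q)
    (g : ℝ → ℝ)
    (hg01 : ∀ t > (0 : ℝ), 0 < g t ∧ g t ≤ 1)
    (hanti : AntitoneOn g (Set.Ioi 0))
    (hnorm : ∀ t > (0 : ℝ), t ^ p * g t ≤ 1)
    (hint : IntegrableOn (fun t => g t ^ (1 / p)) (Set.Ioi 0))
    (v : ℕ → ℝ)
    (hv : ∀ n : ℕ, v n = sInf {t : ℝ | 0 < t ∧ g t ≤ 1 / n}) :
    Summable fun n : ℕ =>
      ((n : ℝ) + 1) ^ (-(1 + 1 / p - 1 / q)) * ∫ u in Set.Ioc 0 (v (n + 1)), g u ^ (1 / q) := by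
  have hp0 : (0 : ℝ) < p := by linarith
  have hq0 : (0 : ℝ) < q := by linarith
  set δ : ℝ := 1 / p - 1 / q with hδdef
  have hδ : 0 < δ := by
    have : 1 / q < 1 / p := one_div_lt_one_div_of_lt hp0 hpq
    simp only [hδdef]; linarith
  have hexp : -(1 + 1 / p - 1 / q) = -(1 + δ) := by rw [hδdef]; ring
  -- basic facts about v
  have hSbdd : ∀ n : ℕ, BddBelow {t : ℝ | 0 < t ∧ g t ≤ 1 / n} :=
    fun n => ⟨0, fun t ht => le_of_lt ht.1⟩
  have hSne : ∀ n : ℕ, 1 ≤ n → ({t : ℝ | 0 < t ∧ g t ≤ 1 / n}).Nonempty := by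
    intro n hn
    have hnpos : (0 : ℝ) < n := by exact_mod_cast hn
    have ht : (0 : ℝ) < (n : ℝ) ^ (1 / p) := Real.rpow_pos_of_pos hnpos _
    refine ⟨(n : ℝ) ^ (1 / p), ht, ?_⟩
    have h1 := hnorm _ ht
    have h2 : ((n : ℝ) ^ (1 / p)) ^ p = (n : ℝ) := by
      rw [← Real.rpow_mul hnpos.le, one_div_mul_cancel (ne_of_gt hp0), Real.rpow_one]
    rw [h2] at h1
    rw [le_div_iff₀ hnpos]
    linarith
  have hv0 : v 0 = 0 := by
    rw [hv]
    have : {t : ℝ | 0 < t ∧ g t ≤ 1 / ((0 : ℕ) : ℝ)} = ∅ := by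
      ext t; simp only [Set.mem_setOf_eq, Set.mem_empty_iff_false, iff_false, not_and]
      intro h1 h2
      have := (hg01 t h1).1
      rw [Nat.cast_zero, div_zero] at h2
      linarith
    rw [this, Real.sInf_empty]
  have hvnn : ∀ n : ℕ, 0 ≤ v n := by
    intro n; rw [hv]; exact Real.sInf_nonneg fun t ht => le_of_lt ht.1
  have hstep : ∀ n : ℕ, v n ≤ v (n + 1) := by
    intro n
    rcases Nat.eq_zero_or_pos n with rfl | hn
    · rw [hv0]; exact hvnn 1
    · rw [hv, hv]
      apply csInf_le_csInf (hSbdd n) (hSne (n + 1) (by omega))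
      intro t ht
      refine ⟨ht.1, le_trans ht.2 ?_⟩
      apply one_div_le_one_div_of_le (by exact_mod_cast hn)
      exact_mod_cast Nat.le_succ n
  have hvmono : Monotone v := monotone_nat_of_le_succ hstep
  have hglt : ∀ n : ℕ, 1 ≤ n → ∀ u : ℝ, 0 < u → u < v n → 1 / (n : ℝ) < g u := by
    intro n hn u hu hlt
    by_contra hcon
    push_neg at hcon
    have : v n ≤ u := by rw [hv]; exact csInf_le (hSbdd n) ⟨hu, hcon⟩
    linarith
  -- measurability of g ^ (1/q) on (0, ∞)
  have hGp_meas : AEStronglyMeasurable (fun u => g u ^ (1 / p))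
      (volume.restrict (Set.Ioi (0 : ℝ))) := hint.1
  have hcont : Continuous fun x : ℝ => x ^ (p / q) := by
    rw [continuous_iff_continuousAt]
    intro x
    exact Real.continuousAt_rpow_const x (p / q) (Or.inr (by positivity))
  have hGq_meas : AEStronglyMeasurable (fun u => g u ^ (1 / q))
      (volume.restrict (Set.Ioi (0 : ℝ))) := by
    have h1 : AEStronglyMeasurable (fun u => (g u ^ (1 / p)) ^ (p / q))
        (volume.restrict (Set.Ioi (0 : ℝ))) := hcont.comp_aestronglyMeasurable hGp_meas
    apply h1.congr
    filter_upwards [ae_restrict_mem measurableSet_Ioi] with u hu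
    show (g u ^ (1 / p)) ^ (p / q) = g u ^ (1 / q)
    rw [← Real.rpow_mul (le_of_lt (hg01 u hu).1)]
    congr 1
    field_simp
  have hGq_int : ∀ b : ℝ, IntegrableOn (fun u => g u ^ (1 / q)) (Set.Ioc 0 b) := by
    intro b
    refine ⟨hGq_meas.mono_measure (Measure.restrict_mono Set.Ioc_subset_Ioi_self le_rfl), ?_⟩
    apply HasFiniteIntegral.restrict_of_bounded (C := 1) measure_Ioc_lt_top
    · rw [ae_restrict_iff' measurableSet_Ioc]
      filter_upwards with u hu
      have h1 := hg01 u hu.1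
      rw [Real.norm_eq_abs, abs_of_nonneg (Real.rpow_nonneg h1.1.le _)]
      exact Real.rpow_le_one h1.1.le h1.2 (by positivity)
  have hGp_int : ∀ b : ℝ, IntegrableOn (fun u => g u ^ (1 / p)) (Set.Ioc 0 b) :=
    fun b => hint.mono_set Set.Ioc_subset_Ioi_self
  -- splitting the integral along the v's
  have hsplit : ∀ F : ℝ → ℝ, (∀ b : ℝ, IntegrableOn F (Set.Ioc 0 b)) → ∀ N : ℕ,
      ∫ u in Set.Ioc 0 (v N), F u =
        ∑ k ∈ Finset.range N, ∫ u in Set.Ioc (v k) (v (k + 1)), F u := by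
    intro F hF N
    induction N with
    | zero => rw [hv0]; simp
    | succ n ih =>
      rw [Finset.sum_range_succ, ← ih,
        ← Set.Ioc_union_Ioc_eq_Ioc (hvnn n) (hstep n),
        setIntegral_union (Set.Ioc_disjoint_Ioc_of_le le_rfl) measurableSet_Ioc
          (hF (v n)) ((hF (v (n + 1))).mono_set (Set.Ioc_subset_Ioc_left (hvnn n)))]
  -- key per-piece inequality
  have hkey : ∀ k : ℕ,
      ((k : ℝ) + 1) ^ (-δ) * ∫ u in Set.Ioc (v k) (v (k + 1)), g u ^ (1 / q)
        ≤ ∫ u in Set.Ioc (v k) (v (k + 1)), g u ^ (1 / p) := by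
    intro k
    have hc0 : (0 : ℝ) < (k : ℝ) + 1 := by positivity
    rw [integral_Ioc_eq_integral_Ioo, integral_Ioc_eq_integral_Ioo, ← integral_const_mul]
    have hsub : Set.Ioo (v k) (v (k + 1)) ⊆ Set.Ioc 0 (v (k + 1)) := by
      intro u hu
      exact ⟨lt_of_le_of_lt (hvnn k) hu.1, hu.2.le⟩
    have hsub' : Set.Ioo (v k) (v (k + 1)) ⊆ Set.Ioi (0 : ℝ) := by
      intro u hu; exact lt_of_le_of_lt (hvnn k) hu.1
    apply setIntegral_mono_on
    · exact (((hGq_int (v (k + 1))).mono_set hsub)).const_mul _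
    · exact hint.mono_set hsub'
    · exact measurableSet_Ioo
    · intro u hu
      have hupos : 0 < u := lt_of_le_of_lt (hvnn k) hu.1
      have hgpos := (hg01 u hupos).1
      have hglt' : 1 / ((k : ℝ) + 1) < g u := by
        have := hglt (k + 1) (by omega) u hupos hu.2
        push_cast at this
        exact this
      have h1 : g u ^ (1 / q) = g u ^ (1 / p) * g u ^ (-δ) := by
        rw [← Real.rpow_add hgpos]
        congr 1
        rw [hδdef]; ring
      have h2 : g u ^ (-δ) ≤ ((k : ℝ) + 1) ^ δ := by
        have heq : (1 / ((k : ℝ) + 1)) ^ (-δ) = ((k : ℝ) + 1) ^ δ := by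
          rw [one_div, Real.inv_rpow hc0.le, Real.rpow_neg hc0.le, inv_inv]
        rw [← heq]
        exact Real.rpow_le_rpow_of_nonpos (by positivity) hglt'.le (by linarith)
      have h3 : ((k : ℝ) + 1) ^ (-δ) * ((k : ℝ) + 1) ^ δ = 1 := by
        rw [← Real.rpow_add hc0]; simp
      have hgp : 0 ≤ g u ^ (1 / p) := Real.rpow_nonneg hgpos.le _
      have hcp : 0 ≤ ((k : ℝ) + 1) ^ (-δ) := Real.rpow_nonneg hc0.le _
      calc ((k : ℝ) + 1) ^ (-δ) * g u ^ (1 / q)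
          = ((k : ℝ) + 1) ^ (-δ) * (g u ^ (1 / p) * g u ^ (-δ)) := by rw [h1]
        _ ≤ ((k : ℝ) + 1) ^ (-δ) * (g u ^ (1 / p) * ((k : ℝ) + 1) ^ δ) := by
            apply mul_le_mul_of_nonneg_left _ hcp
            exact mul_le_mul_of_nonneg_left h2 hgp
        _ = g u ^ (1 / p) * (((k : ℝ) + 1) ^ (-δ) * ((k : ℝ) + 1) ^ δ) := by ring
        _ = g u ^ (1 / p) := by rw [h3, mul_one]
  -- nonnegativity of the pieces
  have hJq_nn : ∀ k : ℕ, 0 ≤ ∫ u in Set.Ioc (v k) (v (k + 1)), g u ^ (1 / q) := by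
    intro k
    apply setIntegral_nonneg measurableSet_Ioc
    intro u hu
    have hupos : 0 < u := lt_of_le_of_lt (hvnn k) hu.1
    exact Real.rpow_nonneg (hg01 u hupos).1.le _
  -- the final bound
  apply summable_of_sum_range_le (c := (1 + 1 / δ) * ∫ u in Set.Ioi (0 : ℝ), g u ^ (1 / p))
  · intro n
    apply mul_nonneg (Real.rpow_nonneg (by positivity) _)
    apply setIntegral_nonneg measurableSet_Ioc
    intro u hu
    exact Real.rpow_nonneg (hg01 u hu.1).1.le _
  · intro N
    have hchain :
        ∑ n ∈ Finset.range N,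
            ((n : ℝ) + 1) ^ (-(1 + δ)) * ∫ u in Set.Ioc 0 (v (n + 1)), g u ^ (1 / q)
          ≤ (1 + 1 / δ) * ∫ u in Set.Ioi (0 : ℝ), g u ^ (1 / p) := by
      have hsum1 : ∀ n : ℕ,
          ((n : ℝ) + 1) ^ (-(1 + δ)) * ∫ u in Set.Ioc 0 (v (n + 1)), g u ^ (1 / q)
            = ∑ k ∈ Finset.range (n + 1),
                ((n : ℝ) + 1) ^ (-(1 + δ)) * ∫ u in Set.Ioc (v k) (v (k + 1)), g u ^ (1 / q) := by
        intro n
        rw [hsplit _ hGq_int (n + 1), Finset.mul_sum]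
      calc ∑ n ∈ Finset.range N,
              ((n : ℝ) + 1) ^ (-(1 + δ)) * ∫ u in Set.Ioc 0 (v (n + 1)), g u ^ (1 / q)
          = ∑ n ∈ Finset.Ico 0 N, ∑ k ∈ Finset.Ico 0 (n + 1),
              ((n : ℝ) + 1) ^ (-(1 + δ)) * ∫ u in Set.Ioc (v k) (v (k + 1)), g u ^ (1 / q) := by
            rw [← Finset.range_eq_Ico]
            refine Finset.sum_congr rfl fun n _ => ?_
            rw [hsum1 n, Finset.range_eq_Ico]
        _ = ∑ k ∈ Finset.Ico 0 N, ∑ n ∈ Finset.Ico k N,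
              ((n : ℝ) + 1) ^ (-(1 + δ)) * ∫ u in Set.Ioc (v k) (v (k + 1)), g u ^ (1 / q) :=
            (Finset.sum_Ico_Ico_comm 0 N fun k n =>
              ((n : ℝ) + 1) ^ (-(1 + δ)) * ∫ u in Set.Ioc (v k) (v (k + 1)), g u ^ (1 / q)).symm
        _ = ∑ k ∈ Finset.range N,
              (∑ n ∈ Finset.Ico k N, ((n : ℝ) + 1) ^ (-(1 + δ)))
                * ∫ u in Set.Ioc (v k) (v (k + 1)), g u ^ (1 / q) := by
            rw [Finset.range_eq_Ico]
            exact Finset.sum_congr rfl fun k _ => (Finset.sum_mul _ _ _).symm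
        _ ≤ ∑ k ∈ Finset.range N,
              ((1 + 1 / δ) * ((k : ℝ) + 1) ^ (-δ))
                * ∫ u in Set.Ioc (v k) (v (k + 1)), g u ^ (1 / q) := by
            apply Finset.sum_le_sum
            intro k _
            exact mul_le_mul_of_nonneg_right (tail_sum hδ k N) (hJq_nn k)
        _ = (1 + 1 / δ) * ∑ k ∈ Finset.range N,
              ((k : ℝ) + 1) ^ (-δ) * ∫ u in Set.Ioc (v k) (v (k + 1)), g u ^ (1 / q) := by
            rw [Finset.mul_sum]
            exact Finset.sum_congr rfl fun k _ => by ring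
        _ ≤ (1 + 1 / δ) * ∑ k ∈ Finset.range N,
              ∫ u in Set.Ioc (v k) (v (k + 1)), g u ^ (1 / p) := by
            apply mul_le_mul_of_nonneg_left _ (by positivity)
            exact Finset.sum_le_sum fun k _ => hkey k
        _ = (1 + 1 / δ) * ∫ u in Set.Ioc 0 (v N), g u ^ (1 / p) := by
            rw [← hsplit _ hGp_int N]
        _ ≤ (1 + 1 / δ) * ∫ u in Set.Ioi (0 : ℝ), g u ^ (1 / p) := by
            apply mul_le_mul_of_nonneg_left _ (by positivity)
            apply setIntegral_mono_set hint
            · filter_upwards [ae_restrict_mem measurableSet_Ioi] with u hu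
              exact Real.rpow_nonneg (hg01 u hu).1.le _
            · exact HasSubset.Subset.eventuallyLE Set.Ioc_subset_Ioi_self
    calc ∑ n ∈ Finset.range N,
            ((n : ℝ) + 1) ^ (-(1 + 1 / p - 1 / q)) * ∫ u in Set.Ioc 0 (v (n + 1)), g u ^ (1 / q)
        = ∑ n ∈ Finset.range N,
            ((n : ℝ) + 1) ^ (-(1 + δ)) * ∫ u in Set.Ioc 0 (v (n + 1)), g u ^ (1 / q) := by
          refine Finset.sum_congr rfl fun n _ => ?_
          rw [hexp]
      _ ≤ (1 + 1 / δ) * ∫ u in Set.Ioi (0 : ℝ), g u ^ (1 / p) := hchain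
end

section
/- Let 1 < p < 2 and let g : (0, ∞) → [0, 1] be a nonincreasing function with g(t) > 0 for all t > 0, sup_{t>0} t^p g(t) ≤ 1, and ∫_0^∞ g(t)^{1/p} dt < ∞. For n ≥ 1 set v_n := inf{ t > 0 : g(t) ≤ 1/n }. Then ∑_{n=1}^∞ v_n / n^{1 + 1/p} < ∞. -/
open MeasureTheory Filter

/-- Tangent line bound for rpow with exponent in (0,1]. -/
lemma aux_tangent {q y : ℝ} (hq0 : 0 < q) (hq1 : q ≤ 1) (hy : 0 ≤ y) :
    y ^ q ≤ 1 + q * (y - 1) := by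
  have h := Real.geom_mean_le_arith_mean2_weighted hq0.le (by linarith : (0:ℝ) ≤ 1 - q)
    hy zero_le_one (by ring)
  rw [Real.one_rpow, mul_one] at h
  linarith

/-- Key telescoping bound: for `x ≥ 1`, `(x+1)^{-(1+q)} ≤ (1/q)(x^{-q} - (x+1)^{-q})`. -/
lemma aux_L {q : ℝ} (hq0 : 0 < q) (hq1 : q ≤ 1) {x : ℝ} (hx : 1 ≤ x) :
    (x + 1) ^ (-(1 + q)) ≤ (1 / q) * (x ^ (-q) - (x + 1) ^ (-q)) := by
  have hx0 : (0:ℝ) < x := lt_of_lt_of_le one_pos hx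
  have hx1 : (0:ℝ) < x + 1 := by linarith
  obtain ⟨y, hy_def⟩ : ∃ y : ℝ, y = x / (x + 1) := ⟨_, rfl⟩
  have hy0 : 0 < y := hy_def ▸ div_pos hx0 hx1
  have hy1 : y < 1 := hy_def ▸ (div_lt_one hx1).mpr (by linarith)
  have htan : y ^ q ≤ 1 + q * (y - 1) := aux_tangent hq0 hq1 hy0.le
  have hyq : 0 < y ^ q := Real.rpow_pos_of_pos hy0 q
  have hinv : (1 + q * (1 - y)) * y ^ q ≤ 1 := by
    nlinarith [mul_le_mul_of_nonneg_left htan (show (0:ℝ) ≤ 1 + q*(1-y) by nlinarith),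
      sq_nonneg (q*(1-y))]
  have hinv2 : 1 + q * (1 - y) ≤ (y ^ q)⁻¹ := by
    calc 1 + q * (1 - y) = ((1 + q * (1 - y)) * y ^ q) * (y ^ q)⁻¹ := by field_simp
      _ ≤ 1 * (y ^ q)⁻¹ := mul_le_mul_of_nonneg_right hinv (by positivity)
      _ = (y ^ q)⁻¹ := one_mul _
  have hxy : (x + 1) * y = x := by rw [hy_def]; field_simp
  have hsplit : x ^ (-q) = (x + 1) ^ (-q) * y ^ (-q) := by
    conv_lhs => rw [← hxy, Real.mul_rpow hx1.le hy0.le]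
  have hyneg : y ^ (-q) = (y ^ q)⁻¹ := Real.rpow_neg hy0.le q
  have hB : 0 < (x + 1) ^ (-q) := Real.rpow_pos_of_pos hx1 _
  have hE : (x + 1) ^ (-(1 + q)) = (x + 1) ^ (-q) * (x + 1)⁻¹ := by
    rw [show -(1 + q) = -q + (-1) by ring, Real.rpow_add hx1, Real.rpow_neg_one]
  have h1y : 1 - y = (x + 1)⁻¹ := by rw [hy_def]; field_simp; ring
  have key : (x + 1) ^ (-q) * (1 + q * (1 - y)) ≤ (x + 1) ^ (-q) * (y ^ q)⁻¹ :=
    mul_le_mul_of_nonneg_left hinv2 hB.le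
  rw [h1y] at key
  rw [hE, hsplit, hyneg, one_div_mul_eq_div, le_div_iff₀ hq0]
  nlinarith [key]


/-- Telescoped tail bound starting at `k ≥ 1`. -/
lemma aux_tailA {q : ℝ} (hq0 : 0 < q) (hq1 : q ≤ 1) {k : ℕ} (hk : 1 ≤ k) (N : ℕ) :
    ∑ n ∈ Finset.Ico k N, ((n : ℝ) + 1) ^ (-(1 + q)) ≤ (1 / q) * (k : ℝ) ^ (-q) := by
  rcases le_or_gt k N with hkN | hkN
  · have main : ∀ M, k ≤ M → ∑ n ∈ Finset.Ico k M, ((n : ℝ) + 1) ^ (-(1 + q))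
        ≤ (1 / q) * ((k : ℝ) ^ (-q) - (M : ℝ) ^ (-q)) := by
      intro M hM
      induction M, hM using Nat.le_induction with
      | base => simp
      | succ M hM ih =>
        rw [Finset.sum_Ico_succ_top hM]
        have hL := aux_L hq0 hq1 (show (1:ℝ) ≤ (M:ℝ) by exact_mod_cast hk.trans hM)
        push_cast
        push_cast at ih
        linarith
    have hN : (0:ℝ) ≤ (N:ℝ) ^ (-q) := Real.rpow_nonneg (Nat.cast_nonneg N) _
    have := main N hkN
    have hq : (0:ℝ) < 1/q := by positivity
    nlinarith
  · rw [Finset.Ico_eq_empty (by omega), Finset.sum_empty]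
    positivity

/-- Tail bound for all `k`. -/
lemma aux_tail {q : ℝ} (hq0 : 0 < q) (hq1 : q ≤ 1) (k N : ℕ) :
    ∑ n ∈ Finset.Ico k N, ((n : ℝ) + 1) ^ (-(1 + q)) ≤ (2 / q + 1) * ((k : ℝ) + 1) ^ (-q) := by
  have hq' : (0:ℝ) < 1/q := by positivity
  rcases Nat.eq_zero_or_pos k with rfl | hk
  · rcases Nat.eq_zero_or_pos N with rfl | hN
    · simp only [Finset.Ico_self, Finset.sum_empty]; positivity
    · have hsplit := Finset.sum_Ico_consecutive (fun n : ℕ => ((n:ℝ)+1) ^ (-(1+q)))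
        (Nat.zero_le 1) hN
      have h0 : ∑ n ∈ Finset.Ico (0:ℕ) 1, ((n : ℝ) + 1) ^ (-(1 + q)) = 1 := by
        rw [show Finset.Ico (0:ℕ) 1 = {0} from rfl]
        simp
      have h1 : ∑ n ∈ Finset.Ico 1 N, ((n : ℝ) + 1) ^ (-(1 + q)) ≤ (1 / q) * ((1:ℕ) : ℝ) ^ (-q) :=
        aux_tailA hq0 hq1 le_rfl N
      rw [Nat.cast_one, Real.one_rpow, mul_one] at h1
      have hgoal : ((0:ℕ):ℝ) + 1 = 1 := by norm_num
      beta_reduce at hsplit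
      rw [hgoal, Real.one_rpow, mul_one, ← hsplit, h0]
      have h2q : 2/q = 2 * (1/q) := by ring
      linarith
  · have h := aux_tailA hq0 hq1 hk N
    have hkR : (1:ℝ) ≤ (k:ℝ) := by exact_mod_cast hk
    -- (k)^{-q} ≤ 2 * (k+1)^{-q}
    have h2 : ((k:ℝ)) ^ (-q) ≤ 2 * ((k : ℝ) + 1) ^ (-q) := by
      have ha : ((k:ℝ) + 1) ^ (-q) ≥ ((2:ℝ) * k) ^ (-q) :=
        Real.rpow_le_rpow_of_nonpos (by linarith) (by linarith) (by linarith)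
      have hb : ((2:ℝ) * k) ^ (-q) = (2:ℝ) ^ (-q) * (k:ℝ) ^ (-q) :=
        Real.mul_rpow (by norm_num) (by linarith)
      have hc : ((2:ℝ)) ^ (-q) ≥ 1/2 := by
        have : (2:ℝ) ^ q ≤ 2 ^ (1:ℝ) :=
          Real.rpow_le_rpow_of_exponent_le (by norm_num) hq1
        rw [Real.rpow_one] at this
        rw [Real.rpow_neg (by norm_num)]
        have h2q : (0:ℝ) < (2:ℝ)^q := Real.rpow_pos_of_pos (by norm_num) q
        rw [ge_iff_le, le_inv_comm₀ (by norm_num) h2q]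
        linarith
      have hkq : (0:ℝ) ≤ (k:ℝ) ^ (-q) := Real.rpow_nonneg (by linarith) _
      nlinarith
    have hpos : (0:ℝ) < ((k:ℝ)+1) ^ (-q) := Real.rpow_pos_of_pos (by linarith) _
    calc ∑ n ∈ Finset.Ico k N, ((n : ℝ) + 1) ^ (-(1 + q)) ≤ (1/q) * (k:ℝ)^(-q) := h
      _ ≤ (1/q) * (2 * ((k:ℝ)+1)^(-q)) := by
          exact mul_le_mul_of_nonneg_left h2 hq'.le
      _ ≤ (2/q + 1) * ((k:ℝ)+1)^(-q) := by
          have e1 : (1/q) * (2 * ((k:ℝ)+1)^(-q)) = (2/q) * (((k:ℝ)+1)^(-q)) := by ring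
          have e2 : (2/q + 1) * (((k:ℝ)+1)^(-q)) = (2/q) * (((k:ℝ)+1)^(-q)) + (((k:ℝ)+1)^(-q)) := by
            ring
          linarith

/-- Let `1 < p < 2` and let `g : (0,∞) → [0,1]` be nonincreasing and positive
with `sup_{t>0} t^p g(t) ≤ 1` and `∫_0^∞ g^{1/p} < ∞`. With truncation levels
`v_n = inf{t > 0 : g(t) ≤ 1/n}`, the series `∑_n v_n / n^{1+1/p}` converges. -/
theorem truncation_levels_summable
    (p : ℝ) (hp1 : 1 < p) (hp2 : p < 2)
    (g : ℝ → ℝ)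
    (hg01 : ∀ t > (0 : ℝ), 0 < g t ∧ g t ≤ 1)
    (hanti : AntitoneOn g (Set.Ioi 0))
    (hnorm : ∀ t > (0 : ℝ), t ^ p * g t ≤ 1)
    (hint : IntegrableOn (fun t => g t ^ (1 / p)) (Set.Ioi 0))
    (v : ℕ → ℝ)
    (hv : ∀ n : ℕ, v n = sInf {t : ℝ | 0 < t ∧ g t ≤ 1 / n}) :
    Summable fun n : ℕ => v (n + 1) / ((n : ℝ) + 1) ^ (1 + 1 / p) := by
  have hp0 : (0:ℝ) < p := by linarith
  set q : ℝ := 1 / p with hq_def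
  have hq0 : 0 < q := by positivity
  have hq1 : q ≤ 1 := by rw [hq_def, div_le_one hp0]; linarith
  -- basic facts about v
  have hbdd : ∀ n : ℕ, BddBelow {t : ℝ | 0 < t ∧ g t ≤ 1 / n} :=
    fun n => ⟨0, fun t ht => ht.1.le⟩
  have hmem : ∀ n : ℕ, 1 ≤ n → ((n:ℝ) ^ q) ∈ {t : ℝ | 0 < t ∧ g t ≤ 1 / n} := by
    intro n hn
    have hn0 : (0:ℝ) < n := by exact_mod_cast hn
    have ht0 : (0:ℝ) < (n:ℝ) ^ q := Real.rpow_pos_of_pos hn0 q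
    refine ⟨ht0, ?_⟩
    have hr : ((n:ℝ) ^ q) ^ p = (n:ℝ) := by
      rw [← Real.rpow_mul hn0.le, hq_def, one_div_mul_cancel (ne_of_gt hp0), Real.rpow_one]
    have := hnorm _ ht0
    rw [hr] at this
    rw [le_div_iff₀ hn0, mul_comm]
    exact this
  have hv_nonneg : ∀ n, 0 ≤ v n := by
    intro n
    rw [hv n]
    exact Real.sInf_nonneg (fun t ht => ht.1.le)
  have hv_mono : ∀ m n : ℕ, m ≤ n → v m ≤ v n := by
    intro m n hmn
    rcases Nat.eq_zero_or_pos n with rfl | hn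
    · interval_cases m; exact le_rfl
    rcases Nat.eq_zero_or_pos m with rfl | hm
    · rw [hv 0]
      have : {t : ℝ | 0 < t ∧ g t ≤ 1 / ((0:ℕ):ℝ)} = ∅ := by
        ext t; simp only [Set.mem_setOf_eq, Set.mem_empty_iff_false, iff_false, not_and]
        intro ht
        have := (hg01 t ht).1
        simp only [Nat.cast_zero, div_zero]
        linarith
      rw [this, Real.sInf_empty]
      exact hv_nonneg n
    · rw [hv m, hv n]
      apply csInf_le_csInf (hbdd m) ⟨_, hmem n hn⟩
      intro t ht
      refine ⟨ht.1, ht.2.trans ?_⟩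
      have hm0 : (0:ℝ) < m := by exact_mod_cast hm
      have hn0 : (0:ℝ) < n := by exact_mod_cast hn
      apply one_div_le_one_div_of_le hm0
      exact_mod_cast hmn
  have hkey : ∀ n : ℕ, ∀ t : ℝ, 0 < t → t < v n → 1 / (n:ℝ) < g t := by
    intro n t ht htv
    by_contra hle
    push_neg at hle
    have : v n ≤ t := by
      rw [hv n]; exact csInf_le (hbdd n) ⟨ht, hle⟩
    linarith
  -- integrability
  have hIg : IntegrableOn (fun t => g t ^ q) (Set.Ioi 0) := hint
  set I : ℝ := ∫ t in Set.Ioi 0, g t ^ q with hI_def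
  set S : ℕ → ℝ := fun k => ∫ t in Set.Ioc (v k) (v (k+1)), g t ^ q with hS_def
  -- claim 1 : (v (k+1) - v k) * ((k:ℝ)+1)^(-q) ≤ S k
  have claim1 : ∀ k : ℕ, (v (k+1) - v k) * (((k:ℝ)+1)) ^ (-q) ≤ S k := by
    intro k
    have hmk : v k ≤ v (k+1) := hv_mono k (k+1) (Nat.le_succ k)
    have hsub : Set.Ioo (v k) (v (k+1)) ⊆ Set.Ioi 0 :=
      fun t ht => lt_of_le_of_lt (hv_nonneg k) ht.1
    have hint' : IntegrableOn (fun t => g t ^ q) (Set.Ioo (v k) (v (k+1))) :=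
      hIg.mono_set hsub
    have hconst : IntegrableOn (fun _ : ℝ => (((k:ℝ)+1)) ^ (-q)) (Set.Ioo (v k) (v (k+1))) := by
      apply (integrableOn_const_iff enorm_ne_top).mpr
      right
      rw [Real.volume_Ioo]
      exact ENNReal.ofReal_lt_top
    have hpt : ∀ t ∈ Set.Ioo (v k) (v (k+1)), (((k:ℝ)+1)) ^ (-q) ≤ g t ^ q := by
      intro t ht
      have ht0 : 0 < t := hsub ht
      have hgt : 1 / ((k:ℝ)+1) < g t := by
        have := hkey (k+1) t ht0 ht.2
        push_cast at this
        exact this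
      have he : (((k:ℝ)+1)) ^ (-q) = (1 / ((k:ℝ)+1)) ^ q := by
        rw [Real.rpow_neg (by positivity), one_div, Real.inv_rpow (by positivity)]
      rw [he]
      exact Real.rpow_le_rpow (by positivity) hgt.le hq0.le
    have hmono := setIntegral_mono_on hconst hint' measurableSet_Ioo hpt
    rw [setIntegral_const, Real.volume_real_Ioo_of_le hmk, smul_eq_mul]
      at hmono
    rw [hS_def]
    calc (v (k+1) - v k) * (((k:ℝ)+1)) ^ (-q) ≤ ∫ t in Set.Ioo (v k) (v (k+1)), g t ^ q := hmono
      _ = ∫ t in Set.Ioc (v k) (v (k+1)), g t ^ q := (integral_Ioc_eq_integral_Ioo).symm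
  -- v 0 = 0
  have hv0 : v 0 = 0 := by
    rw [hv 0]
    have : {t : ℝ | 0 < t ∧ g t ≤ 1 / ((0:ℕ):ℝ)} = ∅ := by
      ext t; simp only [Set.mem_setOf_eq, Set.mem_empty_iff_false, iff_false, not_and]
      intro ht
      have := (hg01 t ht).1
      simp only [Nat.cast_zero, div_zero]
      linarith
    rw [this, Real.sInf_empty]
  -- claim 2 : partial sums of S bounded by I
  have claim2 : ∀ N : ℕ, ∑ k ∈ Finset.range N, S k ≤ I := by
    intro N
    have hEq : ∑ k ∈ Finset.range N, S k = ∫ t in Set.Ioc 0 (v N), g t ^ q := by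
      induction N with
      | zero => simp [hv0]
      | succ N ih =>
        rw [Finset.sum_range_succ, ih, hS_def]
        have h0N : (0:ℝ) ≤ v N := hv_nonneg N
        have hNN : v N ≤ v (N+1) := hv_mono N (N+1) (Nat.le_succ N)
        rw [← setIntegral_union (Set.Ioc_disjoint_Ioc_of_le le_rfl) measurableSet_Ioc
          (hIg.mono_set (fun t ht => lt_of_lt_of_le ht.1 le_rfl : Set.Ioc 0 (v N) ⊆ Set.Ioi 0))
          (hIg.mono_set (fun t ht => lt_of_le_of_lt h0N ht.1 : Set.Ioc (v N) (v (N+1)) ⊆ Set.Ioi 0)),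
          Set.Ioc_union_Ioc_eq_Ioc h0N hNN]
    rw [hEq, hI_def]
    apply setIntegral_mono_set hIg
    · filter_upwards [ae_restrict_mem measurableSet_Ioi] with t ht
      exact Real.rpow_nonneg (hg01 t ht).1.le q
    · exact HasSubset.Subset.eventuallyLE (fun t ht => lt_of_lt_of_le ht.1 le_rfl)
  -- nonnegativity of terms
  have hterm_nonneg : ∀ n : ℕ, 0 ≤ v (n + 1) / ((n : ℝ) + 1) ^ (1 + q) := by
    intro n
    apply div_nonneg (hv_nonneg _)
    positivity
  -- main bound on partial sums
  apply summable_of_sum_range_le hterm_nonneg (c := (2/q + 1) * I)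
  intro N
  have step1 : ∀ n : ℕ, v (n + 1) / ((n : ℝ) + 1) ^ (1 + q)
      = ∑ k ∈ Finset.range (n+1), (v (k+1) - v k) * ((n : ℝ) + 1) ^ (-(1 + q)) := by
    intro n
    rw [← Finset.sum_mul, Finset.sum_range_sub v (n+1), hv0, sub_zero,
      Real.rpow_neg (by positivity), div_eq_mul_inv]
  calc ∑ n ∈ Finset.range N, v (n + 1) / ((n : ℝ) + 1) ^ (1 + q)
      = ∑ n ∈ Finset.range N, ∑ k ∈ Finset.range (n+1),
        (v (k+1) - v k) * ((n : ℝ) + 1) ^ (-(1 + q)) := Finset.sum_congr rfl (fun n _ => step1 n)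
    _ = ∑ k ∈ Finset.range N, ∑ n ∈ Finset.Ico k N,
        (v (k+1) - v k) * ((n : ℝ) + 1) ^ (-(1 + q)) := by
        apply Finset.sum_comm'
        intro n k
        simp only [Finset.mem_range, Finset.mem_Ico]
        omega
    _ = ∑ k ∈ Finset.range N, (v (k+1) - v k) *
        ∑ n ∈ Finset.Ico k N, ((n : ℝ) + 1) ^ (-(1 + q)) := by
        refine Finset.sum_congr rfl (fun k _ => ?_)
        rw [Finset.mul_sum]
    _ ≤ ∑ k ∈ Finset.range N, (2/q + 1) * S k := by
        apply Finset.sum_le_sum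
        intro k _
        have hd : 0 ≤ v (k+1) - v k := sub_nonneg.mpr (hv_mono k (k+1) (Nat.le_succ k))
        calc (v (k+1) - v k) * ∑ n ∈ Finset.Ico k N, ((n : ℝ) + 1) ^ (-(1 + q))
            ≤ (v (k+1) - v k) * ((2/q + 1) * ((k : ℝ) + 1) ^ (-q)) :=
              mul_le_mul_of_nonneg_left (aux_tail hq0 hq1 k N) hd
          _ = (2/q + 1) * ((v (k+1) - v k) * ((k : ℝ) + 1) ^ (-q)) := by ring
          _ ≤ (2/q + 1) * S k := by
              apply mul_le_mul_of_nonneg_left (claim1 k)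
              positivity
    _ = (2/q + 1) * ∑ k ∈ Finset.range N, S k := (Finset.mul_sum _ _ _).symm
    _ ≤ (2/q + 1) * I := by
        apply mul_le_mul_of_nonneg_left (claim2 N)
        positivity
end

section
/- Let 1 < p < 2 and let g : (0, ∞) → [0, 1] be a nonincreasing function with g(t) > 0 for all t > 0, sup_{t>0} t^p g(t) ≤ 1, and ∫_0^∞ g(t)^{1/p} dt < ∞. For n ≥ 1 set v_n := inf{ t > 0 : g(t) ≤ 1/n }. Then ∑_{n=1}^∞ n^{−1/p} ∫_{v_n}^∞ g(u) du < ∞. -/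
open MeasureTheory Filter Finset

-- harmonic-type sum bound
lemma sum_rpow_neg_le (p : ℝ) (hp1 : 1 < p) (K : ℕ) :
    ∑ n ∈ Finset.range K, ((n : ℝ) + 1) ^ (-(1 / p)) ≤
      (p / (p - 1)) * (K : ℝ) ^ (1 - 1 / p) := by
  have hp0 : (0 : ℝ) < p := lt_trans one_pos hp1
  have hs0 : (0 : ℝ) < 1 - 1 / p := by
    have : 1 / p < 1 := by rw [div_lt_one hp0]; exact hp1
    linarith
  have hs1 : 1 - 1 / p ≤ 1 := by
    have : 0 < 1 / p := by positivity
    linarith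
  induction K with
  | zero =>
      simp only [Finset.sum_range_zero, Nat.cast_zero, Real.zero_rpow hs0.ne', mul_zero]
      exact le_rfl
  | succ K ih =>
      rw [Finset.sum_range_succ]
      have key : ((K : ℝ)) ^ (1 - 1/p) ≤ ((K : ℝ) + 1) ^ (1 - 1/p)
          - (1 - 1/p) * ((K : ℝ) + 1) ^ (1 - 1/p) / ((K : ℝ) + 1) := by
        have hK1 : (0 : ℝ) < (K : ℝ) + 1 := by positivity
        have hx : (-1 : ℝ) ≤ -(1 / ((K : ℝ) + 1)) := by
          rw [neg_le_neg_iff]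
          rw [div_le_one hK1]; linarith [Nat.cast_nonneg (α := ℝ) K]
        have hb := rpow_one_add_le_one_add_mul_self hx hs0.le hs1
        have heq : (1 : ℝ) + -(1 / ((K : ℝ) + 1)) = (K : ℝ) / ((K : ℝ) + 1) := by
          field_simp
          ring
        rw [heq] at hb
        have hmul : ((K : ℝ) / ((K : ℝ) + 1)) ^ (1 - 1/p) =
            (K : ℝ) ^ (1 - 1/p) / ((K : ℝ) + 1) ^ (1 - 1/p) := by
          rw [Real.div_rpow (Nat.cast_nonneg K) hK1.le]
        rw [hmul] at hb
        have h2 : (K : ℝ) ^ (1 - 1/p) ≤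
            (1 + (1 - 1/p) * -(1 / ((K : ℝ) + 1))) * ((K : ℝ) + 1) ^ (1 - 1/p) := by
          rw [div_le_iff₀ (Real.rpow_pos_of_pos hK1 _)] at hb
          linarith [hb]
        calc (K : ℝ) ^ (1 - 1/p)
            ≤ (1 + (1 - 1/p) * -(1 / ((K : ℝ) + 1))) * ((K : ℝ) + 1) ^ (1 - 1/p) := h2
          _ = ((K : ℝ) + 1) ^ (1 - 1/p)
              - (1 - 1/p) * ((K : ℝ) + 1) ^ (1 - 1/p) / ((K : ℝ) + 1) := by ring
      have hlast : ((K : ℝ) + 1) ^ (-(1 / p)) =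
          ((K : ℝ) + 1) ^ (1 - 1/p) / ((K : ℝ) + 1) := by
        have hK1 : (0 : ℝ) < (K : ℝ) + 1 := by positivity
        rw [eq_div_iff hK1.ne', show (1 : ℝ) - 1/p = -(1/p) + 1 by ring,
          Real.rpow_add hK1, Real.rpow_one]
      have hCs : (p / (p - 1)) * (1 - 1/p) = 1 := by
        have h1 : p - 1 ≠ 0 := by linarith
        field_simp
      push_cast
      calc (∑ n ∈ Finset.range K, ((n : ℝ) + 1) ^ (-(1 / p))) + ((K : ℝ) + 1) ^ (-(1/p))
          ≤ (p / (p-1)) * (K : ℝ) ^ (1 - 1/p) + ((K : ℝ) + 1) ^ (1 - 1/p) / ((K : ℝ) + 1) := by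
            rw [hlast] at *; exact add_le_add ih le_rfl
        _ ≤ (p / (p-1)) * (((K : ℝ) + 1) ^ (1 - 1/p)
              - (1 - 1/p) * ((K : ℝ) + 1) ^ (1 - 1/p) / ((K : ℝ) + 1))
            + ((K : ℝ) + 1) ^ (1 - 1/p) / ((K : ℝ) + 1) := by
            have hC : (0 : ℝ) ≤ p / (p - 1) := by
              apply div_nonneg hp0.le; linarith
            nlinarith [key]
        _ = (p / (p-1)) * ((K : ℝ) + 1) ^ (1 - 1/p)
            - (p / (p-1)) * (1 - 1/p) * (((K : ℝ) + 1) ^ (1 - 1/p) / ((K : ℝ) + 1))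
            + ((K : ℝ) + 1) ^ (1 - 1/p) / ((K : ℝ) + 1) := by ring
        _ = (p / (p-1)) * ((K : ℝ) + 1) ^ (1 - 1/p) := by rw [hCs]; ring

/-- Let `1 < p < 2` and let `g : (0,∞) → [0,1]` be nonincreasing and positive
with `sup_{t>0} t^p g(t) ≤ 1` and `∫_0^∞ g^{1/p} < ∞`. With truncation levels
`v_n = inf{t > 0 : g(t) ≤ 1/n}`, the series `∑_n n^{-1/p} ∫_{v_n}^∞ g(u) du` converges. -/
theorem tail_integral_series_summable
    (p : ℝ) (hp1 : 1 < p) (hp2 : p < 2)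
    (g : ℝ → ℝ)
    (hg01 : ∀ t > (0 : ℝ), 0 < g t ∧ g t ≤ 1)
    (hanti : AntitoneOn g (Set.Ioi 0))
    (hnorm : ∀ t > (0 : ℝ), t ^ p * g t ≤ 1)
    (hint : IntegrableOn (fun t => g t ^ (1 / p)) (Set.Ioi 0))
    (v : ℕ → ℝ)
    (hv : ∀ n : ℕ, v n = sInf {t : ℝ | 0 < t ∧ g t ≤ 1 / n}) :
    Summable fun n : ℕ =>
      ((n : ℝ) + 1) ^ (-(1 / p)) * ∫ u in Set.Ioi (v (n + 1)), g u := by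
  have hp0 : (0 : ℝ) < p := by linarith
  have hs0 : (0 : ℝ) < 1 - 1 / p := by
    have : 1 / p < 1 := by rw [div_lt_one hp0]; exact hp1
    linarith
  have hC0 : (0 : ℝ) ≤ p / (p - 1) := by apply div_nonneg hp0.le; linarith
  -- measurability and integrability of g on Ioi 0
  have hgm : AEMeasurable g (volume.restrict (Set.Ioi (0:ℝ))) :=
    aemeasurable_restrict_of_antitoneOn measurableSet_Ioi hanti
  have hgsm : AEStronglyMeasurable g (volume.restrict (Set.Ioi (0:ℝ))) :=
    hgm.aestronglyMeasurable
  have hg_int : IntegrableOn g (Set.Ioi 0) volume := by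
    refine MeasureTheory.Integrable.mono hint hgsm ?_
    filter_upwards [ae_restrict_mem measurableSet_Ioi] with u hu
    obtain ⟨h0, h1⟩ := hg01 u hu
    rw [Real.norm_eq_abs, Real.norm_eq_abs, abs_of_pos h0,
      abs_of_pos (Real.rpow_pos_of_pos h0 _)]
    calc g u = g u ^ (1:ℝ) := (Real.rpow_one _).symm
      _ ≤ g u ^ (1/p) := Real.rpow_le_rpow_of_exponent_ge h0 h1
          (by rw [div_le_one hp0]; linarith)
  have hv_nonneg : ∀ n, 0 ≤ v n := by
    intro n; rw [hv n]
    exact Real.sInf_nonneg (fun t ht => ht.1.le)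
  -- tail bound: beyond v (n+1), g is at most 1/(n+1)
  have hkey : ∀ n : ℕ, ∀ u : ℝ, v (n + 1) < u → g u ≤ 1 / ((n:ℝ) + 1) := by
    intro n u hlt
    have hu0 : 0 < u := lt_of_le_of_lt (hv_nonneg _) hlt
    have hne : {t : ℝ | 0 < t ∧ g t ≤ 1 / ((n+1 : ℕ) : ℝ)}.Nonempty := by
      refine ⟨((n:ℝ) + 1) ^ (1/p), ?_, ?_⟩
      · positivity
      · have htpos : (0:ℝ) < ((n:ℝ) + 1) ^ (1/p) := by positivity
        have h1 := hnorm _ htpos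
        have h2 : (((n:ℝ) + 1) ^ (1/p)) ^ p = (n:ℝ) + 1 := by
          rw [← Real.rpow_mul (by positivity), one_div_mul_cancel hp0.ne', Real.rpow_one]
        rw [h2] at h1
        rw [le_div_iff₀ (by positivity : (0:ℝ) < ((n+1:ℕ):ℝ))]
        push_cast
        linarith [h1]
    rw [hv (n+1)] at hlt
    obtain ⟨t, ht, htu⟩ := exists_lt_of_csInf_lt hne hlt
    have h3 : g u ≤ g t := hanti ht.1 (Set.mem_Ioi.mpr hu0) htu.le
    refine h3.trans ?_
    have := ht.2
    push_cast at this ⊢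
    exact this
  -- rewrite each integral as an indicator integral over Ioi 0
  have hIeq : ∀ n : ℕ, (∫ u in Set.Ioi (v (n+1)), g u)
      = ∫ u in Set.Ioi (0:ℝ), (Set.Ioi (v (n+1))).indicator g u := by
    intro n
    rw [setIntegral_indicator measurableSet_Ioi, Set.Ioi_inter_Ioi,
      sup_eq_right.mpr (hv_nonneg _)]
  -- pointwise bound on partial sums of integrands
  have hptwise : ∀ N : ℕ, ∀ u ∈ Set.Ioi (0:ℝ),
      ∑ n ∈ Finset.range N, ((n:ℝ)+1) ^ (-(1/p)) * (Set.Ioi (v (n+1))).indicator g u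
        ≤ (p/(p-1)) * g u ^ (1/p) := by
    intro N u hu
    obtain ⟨hg0, hg1⟩ := hg01 u hu
    set K := Nat.floor (g u)⁻¹ with hK
    have hterm : ∀ n ∈ Finset.range N,
        ((n:ℝ)+1) ^ (-(1/p)) * (Set.Ioi (v (n+1))).indicator g u
          ≤ if n ∈ Finset.range K then ((n:ℝ)+1) ^ (-(1/p)) * g u else 0 := by
      intro n _
      by_cases h : v (n+1) < u
      · have h1 : g u ≤ 1 / ((n:ℝ)+1) := hkey n u h
        have hnK : n ∈ Finset.range K := by
          rw [Finset.mem_range]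
          have h2 : ((n:ℝ)+1) ≤ (g u)⁻¹ := by
            rw [le_inv_comm₀ (by positivity) hg0]
            rwa [inv_eq_one_div]
          have h3 : ((n+1 : ℕ) : ℝ) ≤ (g u)⁻¹ := by push_cast; linarith
          have := Nat.le_floor h3
          omega
        rw [if_pos hnK, Set.indicator_of_mem (Set.mem_Ioi.mpr h)]
      · rw [Set.indicator_of_notMem (by simpa using h), mul_zero]
        split_ifs
        · exact mul_nonneg (Real.rpow_nonneg (by positivity) _) hg0.le
        · exact le_rfl
    have h2 : ∑ n ∈ Finset.range N,
        (if n ∈ Finset.range K then ((n:ℝ)+1) ^ (-(1/p)) * g u else 0)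
          ≤ ∑ n ∈ Finset.range K, ((n:ℝ)+1) ^ (-(1/p)) * g u := by
      rw [Finset.sum_ite_mem]
      exact Finset.sum_le_sum_of_subset_of_nonneg Finset.inter_subset_right
        (fun i _ _ => mul_nonneg (Real.rpow_nonneg (by positivity) _) hg0.le)
    have h4 := sum_rpow_neg_le p hp1 K
    have h5 : (K:ℝ) ^ (1-1/p) ≤ ((g u)⁻¹) ^ (1-1/p) :=
      Real.rpow_le_rpow (Nat.cast_nonneg K) (Nat.floor_le (by positivity)) hs0.le
    have h6 : ((g u)⁻¹) ^ (1-1/p) * g u = g u ^ (1/p) := by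
      rw [Real.inv_rpow hg0.le, ← Real.rpow_neg hg0.le, ← Real.rpow_add_one hg0.ne']
      congr 1
      ring
    calc ∑ n ∈ Finset.range N, ((n:ℝ)+1) ^ (-(1/p)) * (Set.Ioi (v (n+1))).indicator g u
        ≤ ∑ n ∈ Finset.range N,
            (if n ∈ Finset.range K then ((n:ℝ)+1) ^ (-(1/p)) * g u else 0) :=
          Finset.sum_le_sum hterm
      _ ≤ ∑ n ∈ Finset.range K, ((n:ℝ)+1) ^ (-(1/p)) * g u := h2
      _ = (∑ n ∈ Finset.range K, ((n:ℝ)+1) ^ (-(1/p))) * g u := by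
          rw [Finset.sum_mul]
      _ ≤ ((p/(p-1)) * (K:ℝ) ^ (1-1/p)) * g u :=
          mul_le_mul_of_nonneg_right h4 hg0.le
      _ ≤ ((p/(p-1)) * ((g u)⁻¹) ^ (1-1/p)) * g u :=
          mul_le_mul_of_nonneg_right
            (mul_le_mul_of_nonneg_left h5 hC0) hg0.le
      _ = (p/(p-1)) * (((g u)⁻¹) ^ (1-1/p) * g u) := by ring
      _ = (p/(p-1)) * g u ^ (1/p) := by rw [h6]
  -- summability via bounded partial sums
  have hind_int : ∀ n : ℕ,
      IntegrableOn (fun u => (Set.Ioi (v (n+1))).indicator g u) (Set.Ioi 0) volume := by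
    intro n
    simpa using hg_int.indicator (measurableSet_Ioi (a := v (n+1)))
  refine summable_of_sum_range_le (c := (p/(p-1)) * ∫ u in Set.Ioi (0:ℝ), g u ^ (1/p)) (fun n => ?_) (fun N => ?_)
  · exact mul_nonneg (Real.rpow_nonneg (by positivity) _)
      (setIntegral_nonneg measurableSet_Ioi
        (fun u hu => (hg01 u (lt_of_le_of_lt (hv_nonneg _) hu)).1.le))
  · have heq : ∑ n ∈ Finset.range N,
        ((n:ℝ)+1) ^ (-(1/p)) * ∫ u in Set.Ioi (v (n+1)), g u
          = ∫ u in Set.Ioi (0:ℝ), ∑ n ∈ Finset.range N,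
              ((n:ℝ)+1) ^ (-(1/p)) * (Set.Ioi (v (n+1))).indicator g u := by
      rw [integral_finset_sum _ (fun n _ => ((hind_int n).const_mul _))]
      refine Finset.sum_congr rfl fun n _ => ?_
      rw [MeasureTheory.integral_const_mul, hIeq n]
    rw [heq]
    calc (∫ u in Set.Ioi (0:ℝ), ∑ n ∈ Finset.range N,
            ((n:ℝ)+1) ^ (-(1/p)) * (Set.Ioi (v (n+1))).indicator g u)
        ≤ ∫ u in Set.Ioi (0:ℝ), (p/(p-1)) * g u ^ (1/p) := by
          refine setIntegral_mono_on
            (integrable_finset_sum _ (fun n _ => ((hind_int n).const_mul _)))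
            (hint.const_mul _) measurableSet_Ioi (hptwise N)
      _ = (p/(p-1)) * ∫ u in Set.Ioi (0:ℝ), g u ^ (1/p) := by
          rw [MeasureTheory.integral_const_mul]
end

section
/- Let 1 < p < 2, let B be a real separable Banach space, and let (Y_n) be a sequence of independent, Bochner integrable, mean-zero B-valued random variables with T_n := Y_1 + ⋯ + Y_n and G_n := σ(Y_1, …, Y_n). If ∑_{n=1}^∞ E‖T_n‖ / n^{1 + 1/p} < ∞, then ∑_{n=1}^∞ E | E( ‖T_{n+1}‖/(n+1)^{1/p} − ‖T_n‖/n^{1/p} | G_n ) | < ∞; that is, the real-valued sequence (‖T_n‖/n^{1/p}, G_n) is a nonnegative quasimartingale. -/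
open MeasureTheory ProbabilityTheory Filter Finset

/-- `partialSum Y n = Y 0 + ⋯ + Y (n-1)`. -/
noncomputable def partialSum {Ω B : Type*} [AddCommMonoid B] (Y : ℕ → Ω → B) (n : ℕ)
    (ω : Ω) : B :=
  ∑ i ∈ Finset.range n, Y i ω

/-- The natural filtration `G_n = σ(Y 0, …, Y (n-1))`. -/
def natFiltration {Ω B : Type*} [MeasurableSpace B] (Y : ℕ → Ω → B) (n : ℕ) :
    MeasurableSpace Ω :=
  ⨆ i ∈ Finset.range n, MeasurableSpace.comap (Y i) inferInstance

section Aux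

variable {α E : Type*} {m m0 : MeasurableSpace α} {μ : Measure α}
  [NormedAddCommGroup E] [NormedSpace ℝ E] [CompleteSpace E]

/-- L¹ contraction property of the conditional expectation, for Banach-valued functions. -/
theorem aux_integral_norm_condexp_le (hm : m ≤ m0) [SigmaFinite (μ.trim hm)]
    {f : α → E} (hf : Integrable f μ) :
    ∫ x, ‖(μ[f|m]) x‖ ∂μ ≤ ∫ x, ‖f x‖ ∂μ := by
  have h1 : ∫ x, ‖(μ[f|m]) x‖ ∂μ = ∫ x, ‖condExpL1 hm μ f x‖ ∂μ :=
    integral_congr_ae ((condExp_ae_eq_condExpL1 hm f).fun_comp fun y => ‖y‖)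
  have h2 : ∫ x, ‖condExpL1 hm μ f x‖ ∂μ = ‖condExpL1 hm μ f‖ :=
    (L1.norm_eq_integral_norm _).symm
  have h3 : ‖condExpL1CLM E hm μ (hf.toL1 f)‖ ≤ 1 * ‖hf.toL1 f‖ :=
    L1.norm_setToL1_le_mul_norm (dominatedFinMeasAdditive_condExpInd E hm μ) zero_le_one _
  have h4 : ‖hf.toL1 f‖ = ∫ x, ‖f x‖ ∂μ := by
    rw [L1.norm_eq_integral_norm]
    exact integral_congr_ae (hf.coeFn_toL1.fun_comp fun y => ‖y‖)
  calc ∫ x, ‖(μ[f|m]) x‖ ∂μ = ‖condExpL1 hm μ f‖ := by rw [h1, h2]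
    _ = ‖condExpL1CLM E hm μ (hf.toL1 f)‖ := by rw [condExpL1_eq hf]
    _ ≤ 1 * ‖hf.toL1 f‖ := h3
    _ = ∫ x, ‖f x‖ ∂μ := by rw [one_mul, h4]

/-- Conditional Jensen inequality for the norm. -/
theorem aux_norm_condexp_le (hm : m ≤ m0) [IsFiniteMeasure μ]
    {f : α → E} (hf : Integrable f μ) :
    ∀ᵐ x ∂μ, ‖(μ[f|m]) x‖ ≤ (μ[(fun x => ‖f x‖)|m]) x := by
  refine ae_le_of_ae_le_trim (hm := hm) ?_
  refine ae_le_of_forall_setIntegral_le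
    ((integrable_condExp.norm).trim hm stronglyMeasurable_condExp.norm)
    (integrable_condExp.trim hm stronglyMeasurable_condExp) fun s hs _ => ?_
  rw [← setIntegral_trim hm stronglyMeasurable_condExp.norm hs,
    ← setIntegral_trim hm stronglyMeasurable_condExp hs,
    setIntegral_condExp hm hf.norm hs]
  have h1 : ∫ x in s, ‖(μ[f|m]) x‖ ∂μ = ∫ x, ‖(s.indicator (μ[f|m])) x‖ ∂μ := by
    rw [← integral_indicator (hm s hs)]
    exact integral_congr_ae (ae_of_all _ fun x =>
      (norm_indicator_eq_indicator_norm (μ[f|m]) x).symm)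
  have h2 : ∫ x, ‖(s.indicator (μ[f|m])) x‖ ∂μ = ∫ x, ‖(μ[s.indicator f|m]) x‖ ∂μ :=
    (integral_congr_ae ((condExp_indicator hf hs).fun_comp fun y => ‖y‖)).symm
  have h3 : ∫ x, ‖(μ[s.indicator f|m]) x‖ ∂μ ≤ ∫ x, ‖(s.indicator f) x‖ ∂μ :=
    aux_integral_norm_condexp_le hm (hf.indicator (hm s hs))
  have h4 : ∫ x, ‖(s.indicator f) x‖ ∂μ = ∫ x in s, ‖f x‖ ∂μ := by
    rw [← integral_indicator (hm s hs)]
    exact integral_congr_ae (ae_of_all _ fun x => norm_indicator_eq_indicator_norm f x)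
  rw [h1, h2]
  exact h3.trans_eq h4

/-- Elementary inequality used for the quasimartingale bound. -/
theorem aux_abs_bound {A b c₁ c₂ : ℝ} (hb : 0 ≤ b) (hbA : b ≤ A) (hc₁ : 0 < c₁)
    (hc : c₁ ≤ c₂) : |A / c₂ - b / c₁| ≤ (A - b) / c₂ + b * (1 / c₁ - 1 / c₂) := by
  have hc₂ : 0 < c₂ := hc₁.trans_le hc
  have hx : 0 ≤ (A - b) / c₂ := div_nonneg (by linarith) hc₂.le
  have hy : 0 ≤ b * (1 / c₁ - 1 / c₂) := by
    have : 1 / c₂ ≤ 1 / c₁ := one_div_le_one_div_of_le hc₁ hc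
    exact mul_nonneg hb (by linarith)
  have hEq : A / c₂ - b / c₁ = (A - b) / c₂ - b * (1 / c₁ - 1 / c₂) := by
    field_simp
    ring
  rw [hEq]
  rw [abs_le]
  constructor <;> linarith

end Aux

/-- For independent, integrable, mean-zero `B`-valued random variables
`(Y_n)` and `1 < p < 2`, if `∑_n E‖T_n‖ / n^{1+1/p} < ∞` then
`∑_n E|E(‖T_{n+1}‖/(n+1)^{1/p} − ‖T_n‖/n^{1/p} | G_n)| < ∞`, i.e. `(‖T_n‖/n^{1/p}, G_n)`
is a (nonnegative) real-valued quasimartingale. -/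
theorem norm_partialSum_quasimartingale
    {B : Type*} [NormedAddCommGroup B] [NormedSpace ℝ B] [CompleteSpace B]
    [TopologicalSpace.SeparableSpace B] [MeasurableSpace B] [BorelSpace B]
    {Ω : Type*} [MeasurableSpace Ω] (μ : Measure Ω) [IsProbabilityMeasure μ]
    (p : ℝ) (hp1 : 1 < p) (hp2 : p < 2)
    (Y : ℕ → Ω → B)
    (hmeas : ∀ n, Measurable (Y n))
    (hint : ∀ n, Integrable (Y n) μ)
    (hmean : ∀ n, ∫ ω, Y n ω ∂μ = 0)
    (hindep : iIndepFun Y μ)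
    (hsum : Summable fun n : ℕ =>
      (∫ ω, ‖partialSum Y (n + 1) ω‖ ∂μ) / ((n : ℝ) + 1) ^ (1 + 1 / p)) :
    Summable fun n : ℕ =>
      ∫ ω, |(μ[(fun ω => ‖partialSum Y (n + 2) ω‖ / ((n : ℝ) + 2) ^ (1 / p)
          - ‖partialSum Y (n + 1) ω‖ / ((n : ℝ) + 1) ^ (1 / p)) |
          natFiltration Y (n + 1)]) ω| ∂μ := by
  classical
  haveI : SecondCountableTopology B := UniformSpace.secondCountable_of_separable B
  -- basic facts about the exponent
  have hp0 : 0 < p := lt_trans one_pos hp1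
  set q : ℝ := 1 / p with hqdef
  have hq0 : 0 < q := by positivity
  have hq1 : q < 1 := by
    rw [hqdef, div_lt_one hp0]; exact hp1
  -- σ-algebras
  have hG_le : ∀ n : ℕ, natFiltration Y (n + 1) ≤ ‹MeasurableSpace Ω› := by
    intro n
    exact iSup_le fun i => iSup_le fun _ => (hmeas i).comap_le
  have hsm : ∀ i, StronglyMeasurable (Y i) := fun i => (hmeas i).stronglyMeasurable
  have hnat : ∀ n : ℕ, natFiltration Y (n + 1) = (Filtration.natural Y hsm) n := by
    intro n
    show (⨆ i ∈ Finset.range (n + 1), MeasurableSpace.comap (Y i) inferInstance) = _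
    simp only [Finset.mem_range, Nat.lt_succ_iff]
    rfl
  -- partial sums
  set T : ℕ → Ω → B := partialSum Y with hTdef
  have hTmeas : ∀ k, Measurable (T k) := by
    intro k
    exact Finset.measurable_sum _ fun i _ => hmeas i
  have hTint : ∀ k, Integrable (T k) μ := by
    intro k
    exact integrable_finset_sum _ fun i _ => hint i
  have hTn_sm : ∀ n : ℕ, StronglyMeasurable[natFiltration Y (n + 1)] (T (n + 1)) := by
    intro n
    have : ∀ i ∈ Finset.range (n + 1), Measurable[natFiltration Y (n + 1)] (Y i) := by
      intro i hi
      have hle : MeasurableSpace.comap (Y i) inferInstance ≤ natFiltration Y (n + 1) :=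
        le_iSup₂ (f := fun (i : ℕ) (_ : i ∈ Finset.range (n + 1)) =>
          MeasurableSpace.comap (Y i) inferInstance) i hi
      exact (comap_measurable (Y i)).mono hle le_rfl
    have hmeas' : Measurable[natFiltration Y (n + 1)] (T (n + 1)) :=
      Finset.measurable_sum _ this
    exact hmeas'.stronglyMeasurable
  -- conditional expectation of the new increment vanishes
  have hcondY : ∀ n : ℕ, μ[Y (n + 1)|natFiltration Y (n + 1)] =ᵐ[μ] fun _ => 0 := by
    intro n
    have hind : Indep (MeasurableSpace.comap (Y (n + 1)) inferInstance)
        (natFiltration Y (n + 1)) μ := by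
      rw [hnat n]
      exact hindep.indep_comap_natural_of_lt hsm n.lt_succ_self
    have h := condExp_indep_eq (μ := μ) (hmeas (n + 1)).comap_le (hG_le n)
      (comap_measurable (Y (n + 1))).stronglyMeasurable hind
    refine h.trans ?_
    rw [hmean (n + 1)]
  -- conditional expectation of the next partial sum
  have hcondT : ∀ n : ℕ, μ[T (n + 2)|natFiltration Y (n + 1)] =ᵐ[μ] T (n + 1) := by
    intro n
    have hTrec : T (n + 2) = T (n + 1) + Y (n + 1) := by
      funext ω
      show (∑ i ∈ Finset.range (n + 2), Y i ω) = (∑ i ∈ Finset.range (n + 1), Y i ω) + Y (n + 1) ω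
      exact Finset.sum_range_succ _ _
    rw [hTrec]
    refine (condExp_add (hTint (n + 1)) (hint (n + 1)) _).trans ?_
    rw [condExp_of_stronglyMeasurable (hG_le n) (hTn_sm n) (hTint (n + 1))]
    filter_upwards [hcondY n] with ω h0
    simp [h0]
  -- conditional Jensen
  have hjen : ∀ n : ℕ, ∀ᵐ ω ∂μ,
      ‖T (n + 1) ω‖ ≤ (μ[(fun ω => ‖T (n + 2) ω‖)|natFiltration Y (n + 1)]) ω := by
    intro n
    filter_upwards [aux_norm_condexp_le (hG_le n) (hTint (n + 2)), hcondT n] with ω h1 h2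
    rw [← h2]
    exact h1
  -- expected norms
  set A : ℕ → ℝ := fun k => ∫ ω, ‖T k ω‖ ∂μ with hAdef
  have hA0 : ∀ k, 0 ≤ A k := fun k => integral_nonneg fun ω => norm_nonneg _
  have hAmono : Monotone fun k => A (k + 1) := by
    refine monotone_nat_of_le_succ fun n => ?_
    have h1 : A (n + 1) = ∫ ω, ‖(μ[T (n + 2)|natFiltration Y (n + 1)]) ω‖ ∂μ :=
      (integral_congr_ae ((hcondT n).fun_comp fun y => ‖y‖)).symm
    rw [h1]
    exact aux_integral_norm_condexp_le (hG_le n) (hTint (n + 2))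
  -- positivity facts for the powers
  have hc₁pos : ∀ n : ℕ, (0:ℝ) < ((n : ℝ) + 1) ^ q := fun n =>
    Real.rpow_pos_of_pos (by positivity) _
  have hc₂pos : ∀ n : ℕ, (0:ℝ) < ((n : ℝ) + 2) ^ q := fun n =>
    Real.rpow_pos_of_pos (by positivity) _
  have hc₁₂ : ∀ n : ℕ, ((n : ℝ) + 1) ^ q ≤ ((n : ℝ) + 2) ^ q := fun n =>
    Real.rpow_le_rpow (by positivity) (by linarith) hq0.le
  -- the key integral bound for each n
  have key : ∀ n : ℕ,
      (∫ ω, |(μ[(fun ω => ‖T (n + 2) ω‖ / ((n : ℝ) + 2) ^ q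
          - ‖T (n + 1) ω‖ / ((n : ℝ) + 1) ^ q) | natFiltration Y (n + 1)]) ω| ∂μ)
        ≤ (A (n + 2) - A (n + 1)) / ((n : ℝ) + 2) ^ q
          + A (n + 1) * (1 / ((n : ℝ) + 1) ^ q - 1 / ((n : ℝ) + 2) ^ q) := by
    intro n
    set G := natFiltration Y (n + 1)
    set c₁ : ℝ := ((n : ℝ) + 1) ^ q
    set c₂ : ℝ := ((n : ℝ) + 2) ^ q
    set a : Ω → ℝ := fun ω => ‖T (n + 2) ω‖ with hadef
    set b : Ω → ℝ := fun ω => ‖T (n + 1) ω‖ with hbdef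
    have ha_int : Integrable a μ := (hTint (n + 2)).norm
    have hb_int : Integrable b μ := (hTint (n + 1)).norm
    have hb_sm : StronglyMeasurable[G] b := (hTn_sm n).norm
    -- identify the conditional expectation
    have e1 : μ[(fun ω => a ω / c₂)|G] =ᵐ[μ] fun ω => (μ[a|G]) ω / c₂ := by
      have hfun : (fun ω => a ω / c₂) = (c₂⁻¹ : ℝ) • a := by
        funext ω; simp [div_eq_inv_mul, smul_eq_mul]
      rw [hfun]
      refine (condExp_smul (c₂⁻¹ : ℝ) a _).trans ?_
      filter_upwards with ω
      simp [div_eq_inv_mul, smul_eq_mul]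
    have e2 : μ[(fun ω => b ω / c₁)|G] = fun ω => b ω / c₁ := by
      refine condExp_of_stronglyMeasurable (hG_le n) ?_ (hb_int.div_const c₁)
      simp only [div_eq_mul_inv]
      exact hb_sm.mul_const _
    have hsplit : (fun ω => a ω / c₂ - b ω / c₁)
        = (fun ω => a ω / c₂) - fun ω => b ω / c₁ := rfl
    have estep : μ[(fun ω => a ω / c₂ - b ω / c₁)|G]
        =ᵐ[μ] fun ω => (μ[a|G]) ω / c₂ - b ω / c₁ := by
      rw [hsplit]
      refine (condExp_sub (ha_int.div_const c₂) (hb_int.div_const c₁) _).trans ?_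
      filter_upwards [e1] with ω h₁
      rw [Pi.sub_apply, h₁, e2]
    -- pointwise bound
    have hptwise : ∀ᵐ ω ∂μ,
        |(μ[(fun ω => a ω / c₂ - b ω / c₁)|G]) ω|
          ≤ ((μ[a|G]) ω - b ω) / c₂ + b ω * (1 / c₁ - 1 / c₂) := by
      filter_upwards [estep, hjen n] with ω h₁ h₂
      rw [h₁]
      exact aux_abs_bound (norm_nonneg _) h₂ (hc₁pos n) (hc₁₂ n)
    -- integrate
    have hRHS_int : Integrable
        (fun ω => ((μ[a|G]) ω - b ω) / c₂ + b ω * (1 / c₁ - 1 / c₂)) μ :=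
      ((integrable_condExp.sub hb_int).div_const c₂).add (hb_int.mul_const _)
    have hineq := integral_mono_ae integrable_condExp.abs hRHS_int hptwise
    have h1' : Integrable (fun ω => ((μ[a|G]) ω - b ω) / c₂) μ :=
      (integrable_condExp.sub hb_int).div_const c₂
    have h2' : Integrable (fun ω => b ω * (1 / c₁ - 1 / c₂)) μ := hb_int.mul_const _
    have hval : ∫ ω, (((μ[a|G]) ω - b ω) / c₂ + b ω * (1 / c₁ - 1 / c₂)) ∂μ
        = (A (n + 2) - A (n + 1)) / c₂ + A (n + 1) * (1 / c₁ - 1 / c₂) := by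
      rw [integral_add h1' h2', integral_div, integral_sub integrable_condExp hb_int,
        integral_mul_const, integral_condExp (hG_le n)]
    exact hineq.trans (le_of_eq hval)
  -- the comparison sequence
  set h : ℕ → ℝ := fun n => A (n + 1) / ((n : ℝ) + 1) ^ (1 + q) with hhdef
  have hh0 : ∀ n, 0 ≤ h n := fun n => div_nonneg (hA0 _) (Real.rpow_pos_of_pos (by positivity) _).le
  have hhsum : Summable h := hsum
  set M : ℝ := ∑' n, h n with hMdef
  -- difference of reciprocal powers bound
  have hδ : ∀ n : ℕ, 1 / ((n : ℝ) + 1) ^ q - 1 / ((n : ℝ) + 2) ^ q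
      ≤ 1 / ((n : ℝ) + 1) ^ (1 + q) := by
    intro n
    set x : ℝ := (n : ℝ) + 1 with hxdef
    have hx1 : (1:ℝ) ≤ x := by simp [hxdef]
    have hx0 : (0:ℝ) < x := lt_of_lt_of_le one_pos hx1
    have hxq : (0:ℝ) < x ^ q := Real.rpow_pos_of_pos hx0 _
    have hyq : (0:ℝ) < (x + 1) ^ q := Real.rpow_pos_of_pos (by linarith) _
    have hxyq : x ^ q ≤ (x + 1) ^ q := Real.rpow_le_rpow hx0.le (by linarith) hq0.le
    -- Bernoulli
    have hber : (x + 1) ^ q ≤ x ^ q * (1 + q / x) := by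
      have h1 : x + 1 = x * (1 + 1 / x) := by field_simp
      have h2 : (x * (1 + 1 / x)) ^ q = x ^ q * (1 + 1 / x) ^ q :=
        Real.mul_rpow hx0.le (by positivity)
      have h3 : (1 + 1 / x) ^ q ≤ 1 + q * (1 / x) :=
        rpow_one_add_le_one_add_mul_self (le_trans (by norm_num) (by positivity : (0:ℝ) ≤ 1 / x)) hq0.le hq1.le
      calc (x + 1) ^ q = x ^ q * (1 + 1 / x) ^ q := by rw [h1, h2]
        _ ≤ x ^ q * (1 + q * (1 / x)) := by
            exact mul_le_mul_of_nonneg_left h3 hxq.le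
        _ = x ^ q * (1 + q / x) := by rw [mul_one_div]
    have hnum : (x + 1) ^ q - x ^ q ≤ q * x ^ q / x := by
      have : x ^ q * (1 + q / x) = x ^ q + q * x ^ q / x := by ring
      nlinarith [hber]
    have hEq : 1 / x ^ q - 1 / (x + 1) ^ q = ((x + 1) ^ q - x ^ q) / (x ^ q * (x + 1) ^ q) := by
      rw [div_sub_div _ _ (ne_of_gt hxq) (ne_of_gt hyq), one_mul, mul_one]
    have hstep : ((x + 1) ^ q - x ^ q) / (x ^ q * (x + 1) ^ q)
        ≤ (q * x ^ q / x) / (x ^ q * x ^ q) := by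
      refine div_le_div₀ (by positivity) hnum (by positivity) ?_
      exact mul_le_mul_of_nonneg_left hxyq hxq.le
    have hsimp : (q * x ^ q / x) / (x ^ q * x ^ q) = q / (x * x ^ q) := by
      field_simp
    have hfin : q / (x * x ^ q) ≤ 1 / (x * x ^ q) := by
      apply div_le_div_of_nonneg_right ?_ (by positivity)
      · exact hq1.le
    have hpow : x ^ (1 + q) = x * x ^ q := Real.rpow_one_add' hx0.le (by positivity)
    have h2n : ((n : ℝ) + 2) = x + 1 := by rw [hxdef]; ring
    rw [h2n, hpow, hEq]
    calc ((x + 1) ^ q - x ^ q) / (x ^ q * (x + 1) ^ q)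
        ≤ (q * x ^ q / x) / (x ^ q * x ^ q) := hstep
      _ = q / (x * x ^ q) := hsimp
      _ ≤ 1 / (x * x ^ q) := hfin
  -- uniform bound A (N+1) / (N+1)^q ≤ 2^(1+q) * M
  have hbound : ∀ N : ℕ, A (N + 1) / ((N : ℝ) + 1) ^ q ≤ 2 ^ (1 + q) * M := by
    intro N
    set D : ℝ := (2 * ((N : ℝ) + 1)) ^ (1 + q) with hDdef
    have hD0 : 0 < D := Real.rpow_pos_of_pos (by positivity) _
    have hterm : ∀ n ∈ Finset.Ico N (2 * N + 2), A (N + 1) / D ≤ h n := by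
      intro n hn
      rw [Finset.mem_Ico] at hn
      have h1 : A (N + 1) ≤ A (n + 1) := hAmono hn.1
      have h2 : ((n : ℝ) + 1) ^ (1 + q) ≤ D := by
        rw [hDdef]
        refine Real.rpow_le_rpow (by positivity) ?_ (by positivity)
        have : (n : ℝ) ≤ 2 * (N : ℝ) + 1 := by exact_mod_cast Nat.lt_succ_iff.mp hn.2
        linarith
      exact div_le_div₀ (hA0 _) h1 (Real.rpow_pos_of_pos (by positivity) _) h2
    have hcard : (Finset.Ico N (2 * N + 2)).card = N + 2 := by
      rw [Nat.card_Ico]; omega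
    have hsum_le : ((N : ℝ) + 2) * (A (N + 1) / D) ≤ M := by
      have h1 : (Finset.Ico N (2 * N + 2)).card • (A (N + 1) / D)
          ≤ ∑ n ∈ Finset.Ico N (2 * N + 2), h n :=
        Finset.card_nsmul_le_sum _ _ _ hterm
      have h2 : ∑ n ∈ Finset.Ico N (2 * N + 2), h n ≤ M :=
        Summable.sum_le_tsum _ (fun n _ => hh0 n) hhsum
      rw [hcard] at h1
      have : ((N : ℝ) + 2) * (A (N + 1) / D) = (N + 2 : ℕ) • (A (N + 1) / D) := by
        rw [nsmul_eq_mul]; push_cast; ring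
      rw [this]
      exact h1.trans h2
    have hND : ((N : ℝ) + 1) * (A (N + 1) / D) ≤ M := by
      have hAD : 0 ≤ A (N + 1) / D := div_nonneg (hA0 _) hD0.le
      nlinarith [hsum_le]
    -- now rearrange
    have hDsplit : D = 2 ^ (1 + q) * (((N : ℝ) + 1) * ((N : ℝ) + 1) ^ q) := by
      rw [hDdef, Real.mul_rpow (by norm_num) (by positivity),
        Real.rpow_one_add' (x := ((N : ℝ) + 1)) (by positivity) (by positivity)]
    have hNq : (0:ℝ) < ((N : ℝ) + 1) ^ q := Real.rpow_pos_of_pos (by positivity) _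
    have h2q : (0:ℝ) < 2 ^ (1 + q) := Real.rpow_pos_of_pos (by norm_num) _
    have hN1 : (0:ℝ) < (N : ℝ) + 1 := by positivity
    have hND' : A (N + 1) / (2 ^ (1 + q) * ((N : ℝ) + 1) ^ q) ≤ M := by
      have hx : ((N : ℝ) + 1) * (A (N + 1) / D)
          = A (N + 1) / (2 ^ (1 + q) * ((N : ℝ) + 1) ^ q) := by
        rw [hDsplit]
        field_simp
      rw [← hx]
      exact hND
    rw [div_le_iff₀ (by positivity)] at hND'
    rw [div_le_iff₀ hNq]
    calc A (N + 1) ≤ M * (2 ^ (1 + q) * ((N : ℝ) + 1) ^ q) := hND'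
      _ = 2 ^ (1 + q) * M * ((N : ℝ) + 1) ^ q := by ring
  -- conclude summability
  set F : ℕ → ℝ := fun n => A (n + 1) / ((n : ℝ) + 1) ^ q with hFdef
  have hF0 : ∀ n, 0 ≤ F n := fun n =>
    div_nonneg (hA0 _) (Real.rpow_pos_of_pos (by positivity) _).le
  refine summable_of_sum_range_le
    (c := 2 ^ (1 + q) * M + 2 * M)
    (fun n => integral_nonneg fun ω => abs_nonneg _) fun N => ?_
  have hstep : ∀ n : ℕ,
      (∫ ω, |(μ[(fun ω => ‖partialSum Y (n + 2) ω‖ / ((n : ℝ) + 2) ^ (1 / p)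
          - ‖partialSum Y (n + 1) ω‖ / ((n : ℝ) + 1) ^ (1 / p)) |
          natFiltration Y (n + 1)]) ω| ∂μ)
        ≤ (F (n + 1) - F n) + 2 * h n := by
    intro n
    have hkn := key n
    have hδn := hδ n
    have hc₁ := hc₁pos n
    have hc₂ := hc₂pos n
    have hFeq : F (n + 1) = A (n + 2) / ((n : ℝ) + 2) ^ q := by
      have hcast : ((n + 1 : ℕ) : ℝ) + 1 = (n : ℝ) + 2 := by push_cast; ring
      simp only [hFdef]
      rw [hcast]
    have hAδ : A (n + 1) * (1 / ((n : ℝ) + 1) ^ q - 1 / ((n : ℝ) + 2) ^ q) ≤ h n := by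
      have := mul_le_mul_of_nonneg_left hδn (hA0 (n + 1))
      calc A (n + 1) * (1 / ((n : ℝ) + 1) ^ q - 1 / ((n : ℝ) + 2) ^ q)
          ≤ A (n + 1) * (1 / ((n : ℝ) + 1) ^ (1 + q)) := this
        _ = h n := by rw [mul_one_div]
    have hABF : (A (n + 2) - A (n + 1)) / ((n : ℝ) + 2) ^ q
          + A (n + 1) * (1 / ((n : ℝ) + 1) ^ q - 1 / ((n : ℝ) + 2) ^ q)
        ≤ (F (n + 1) - F n) + 2 * h n := by
      have hdecomp : (A (n + 2) - A (n + 1)) / ((n : ℝ) + 2) ^ q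
          = (F (n + 1) - F n) + A (n + 1) * (1 / ((n : ℝ) + 1) ^ q - 1 / ((n : ℝ) + 2) ^ q) := by
        rw [hFeq]
        simp only [hFdef]
        ring
      rw [hdecomp]
      linarith [hAδ]
    exact hkn.trans hABF
  calc ∑ n ∈ Finset.range N,
        ∫ ω, |(μ[(fun ω => ‖partialSum Y (n + 2) ω‖ / ((n : ℝ) + 2) ^ (1 / p)
          - ‖partialSum Y (n + 1) ω‖ / ((n : ℝ) + 1) ^ (1 / p)) |
          natFiltration Y (n + 1)]) ω| ∂μ
      ≤ ∑ n ∈ Finset.range N, ((F (n + 1) - F n) + 2 * h n) :=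
        Finset.sum_le_sum fun n _ => hstep n
    _ = (F N - F 0) + 2 * ∑ n ∈ Finset.range N, h n := by
        rw [Finset.sum_add_distrib, Finset.sum_range_sub, Finset.mul_sum]
    _ ≤ 2 ^ (1 + q) * M + 2 * M := by
        have h1 : F N ≤ 2 ^ (1 + q) * M := hbound N
        have h2 : ∑ n ∈ Finset.range N, h n ≤ M :=
          Summable.sum_le_tsum _ (fun n _ => hh0 n) hhsum
        have h3 : 0 ≤ F 0 := hF0 0
        linarith
end

section
/- Let 1 ≤ p ≤ 2 and let B be a real separable Banach space of Rademacher type p. Then there exists a constant c(p) > 0 such that for every finite sequence (X_1, …, X_n) of independent, mean-zero B-valued random variables with E‖X_i‖^p < ∞ for each i, one has E‖∑_{i=1}^n X_i‖^p ≤ c(p) ∑_{i=1}^n E‖X_i‖^p. -/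
open MeasureTheory ProbabilityTheory Finset

open scoped ENNReal NNReal

/-- A normed space `B` is of Rademacher type `p` if there is `c > 0` such that for every finite
sequence `(x_i)` in `B`, `(E‖∑ ε_i x_i‖^p)^{1/p} ≤ c (∑ ‖x_i‖^p)^{1/p}`, where the expectation
over the Rademacher signs is written as an average over all sign patterns. -/
def IsRademacherType (B : Type*) [NormedAddCommGroup B] (p : ℝ) : Prop :=
  ∃ c > 0, ∀ (n : ℕ) (x : Fin n → B),
    ((∑ ε : Fin n → Bool, ‖∑ i, (if ε i then x i else -x i)‖ ^ p) / 2 ^ n) ^ (1 / p)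
      ≤ c * (∑ i, ‖x i‖ ^ p) ^ (1 / p)

lemma aux_type_real {B : Type*} [NormedAddCommGroup B] {p c : ℝ} (hp : 1 ≤ p) (hc : 0 < c)
    (h : ∀ (n : ℕ) (x : Fin n → B),
      ((∑ ε : Fin n → Bool, ‖∑ i, (if ε i then x i else -x i)‖ ^ p) / 2 ^ n) ^ (1 / p)
        ≤ c * (∑ i, ‖x i‖ ^ p) ^ (1 / p))
    (n : ℕ) (x : Fin n → B) :
    ∑ ε : Fin n → Bool, ‖∑ i, (if ε i then x i else -x i)‖ ^ p
      ≤ 2 ^ n * (c ^ p * ∑ i, ‖x i‖ ^ p) := by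
  have hp0 : (0:ℝ) < p := lt_of_lt_of_le one_pos hp
  set A : ℝ := ∑ ε : Fin n → Bool, ‖∑ i, (if ε i then x i else -x i)‖ ^ p with hA
  set S : ℝ := ∑ i, ‖x i‖ ^ p with hS
  have hAnn : 0 ≤ A := Finset.sum_nonneg fun ε _ => Real.rpow_nonneg (norm_nonneg _) p
  have hSnn : 0 ≤ S := Finset.sum_nonneg fun i _ => Real.rpow_nonneg (norm_nonneg _) p
  have h2 : (0:ℝ) < 2 ^ n := by positivity
  have key := h n x
  have hdiv : 0 ≤ A / 2 ^ n := div_nonneg hAnn h2.le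
  have hr := Real.rpow_le_rpow (Real.rpow_nonneg hdiv _) key hp0.le
  rw [← Real.rpow_mul hdiv, one_div_mul_cancel hp0.ne', Real.rpow_one,
    Real.mul_rpow hc.le (Real.rpow_nonneg hSnn _), ← Real.rpow_mul hSnn,
    one_div_mul_cancel hp0.ne', Real.rpow_one] at hr
  rw [div_le_iff₀ h2] at hr
  calc A ≤ c ^ p * S * 2 ^ n := hr
    _ = 2 ^ n * (c ^ p * S) := by ring

lemma aux_map_eval_pi {n : ℕ} {β : Type*} [MeasurableSpace β] (τ : Fin n → Measure β)
    [∀ i, IsProbabilityMeasure (τ i)] (i : Fin n) :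
    (Measure.pi τ).map (Function.eval i) = τ i := by
  ext s hs
  rw [Measure.map_apply (measurable_pi_apply i) hs, Set.eval_preimage, Measure.pi_pi]
  rw [Finset.prod_eq_single i (fun j _ hj => by
    simp [Function.update_of_ne hj, measure_univ]) (by simp)]
  simp

lemma aux_jensen {α : Type*} [MeasurableSpace α] {B : Type*} [NormedAddCommGroup B]
    [NormedSpace ℝ B] (μ : Measure α) [IsProbabilityMeasure μ]
    {p : ℝ} (hp : 1 ≤ p) {f : α → B} (hf : AEStronglyMeasurable f μ) :
    (‖∫ a, f a ∂μ‖₊ : ℝ≥0∞) ^ p ≤ ∫⁻ a, (‖f a‖₊ : ℝ≥0∞) ^ p ∂μ := by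
  have hp0 : (0:ℝ) < p := lt_of_lt_of_le one_pos hp
  have h1 : (‖∫ a, f a ∂μ‖₊ : ℝ≥0∞) ≤ eLpNorm' f 1 μ := by
    simpa [eLpNorm', enorm_eq_nnnorm] using enorm_integral_le_lintegral_enorm (μ := μ) f
  have h2 := eLpNorm'_le_eLpNorm'_of_exponent_le one_pos hp μ hf
  have h3 : (‖∫ a, f a ∂μ‖₊ : ℝ≥0∞) ^ p ≤ (eLpNorm' f p μ) ^ p :=
    ENNReal.rpow_le_rpow (h1.trans h2) hp0.le
  rwa [eLpNorm', ← ENNReal.rpow_mul, one_div_mul_cancel hp0.ne', ENNReal.rpow_one] at h3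

lemma aux_sub_bound {B : Type*} [NormedAddCommGroup B] {p : ℝ} (hp0 : 0 ≤ p) (a b : B) :
    (‖a - b‖₊ : ℝ≥0∞) ^ p ≤ 2 ^ p * ((‖a‖₊ : ℝ≥0∞) ^ p + (‖b‖₊ : ℝ≥0∞) ^ p) := by
  have h1 : (‖a - b‖₊ : ℝ≥0∞) ≤ 2 * max (‖a‖₊ : ℝ≥0∞) (‖b‖₊ : ℝ≥0∞) := by
    calc (‖a - b‖₊ : ℝ≥0∞) ≤ (‖a‖₊ : ℝ≥0∞) + (‖b‖₊ : ℝ≥0∞) := by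
          exact_mod_cast nnnorm_sub_le a b
      _ ≤ max (‖a‖₊ : ℝ≥0∞) (‖b‖₊ : ℝ≥0∞) + max (‖a‖₊ : ℝ≥0∞) (‖b‖₊ : ℝ≥0∞) :=
          add_le_add (le_max_left _ _) (le_max_right _ _)
      _ = 2 * max (‖a‖₊ : ℝ≥0∞) (‖b‖₊ : ℝ≥0∞) := (two_mul _).symm
  calc (‖a - b‖₊ : ℝ≥0∞) ^ p ≤ (2 * max (‖a‖₊ : ℝ≥0∞) (‖b‖₊ : ℝ≥0∞)) ^ p :=
        ENNReal.rpow_le_rpow h1 hp0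
    _ = 2 ^ p * (max (‖a‖₊ : ℝ≥0∞) (‖b‖₊ : ℝ≥0∞)) ^ p := ENNReal.mul_rpow_of_nonneg _ _ hp0
    _ ≤ 2 ^ p * ((‖a‖₊ : ℝ≥0∞) ^ p + (‖b‖₊ : ℝ≥0∞) ^ p) := by
        gcongr
        rcases max_cases ((‖a‖₊ : ℝ≥0∞)) ((‖b‖₊ : ℝ≥0∞)) with ⟨h, _⟩ | ⟨h, _⟩ <;> rw [h]
        · exact le_self_add
        · exact le_add_self

lemma aux_enorm_rpow {B : Type*} [NormedAddCommGroup B] {p : ℝ} (hp0 : 0 ≤ p) (y : B) :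
    (‖y‖₊ : ℝ≥0∞) ^ p = ENNReal.ofReal (‖y‖ ^ p) := by
  rw [← ENNReal.ofReal_coe_nnreal]; exact ENNReal.ofReal_rpow_of_nonneg (norm_nonneg y) hp0

lemma aux_type_ennreal {B : Type*} [NormedAddCommGroup B] {p c : ℝ} (hp : 1 ≤ p) (hc : 0 < c)
    (hreal : ∀ (n : ℕ) (x : Fin n → B),
      ∑ ε : Fin n → Bool, ‖∑ i, (if ε i then x i else -x i)‖ ^ p
        ≤ 2 ^ n * (c ^ p * ∑ i, ‖x i‖ ^ p))
    (n : ℕ) (x : Fin n → B) :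
    ∑ ε : Fin n → Bool, (‖∑ i, (if ε i then x i else -x i)‖₊ : ℝ≥0∞) ^ p
      ≤ 2 ^ n * (ENNReal.ofReal (c ^ p) * ∑ i, (‖x i‖₊ : ℝ≥0∞) ^ p) := by
  have hp0 : (0:ℝ) < p := lt_of_lt_of_le one_pos hp
  calc ∑ ε : Fin n → Bool, (‖∑ i, (if ε i then x i else -x i)‖₊ : ℝ≥0∞) ^ p
      = ENNReal.ofReal (∑ ε : Fin n → Bool, ‖∑ i, (if ε i then x i else -x i)‖ ^ p) := by
        rw [ENNReal.ofReal_sum_of_nonneg fun ε _ => Real.rpow_nonneg (norm_nonneg _) p]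
        exact Finset.sum_congr rfl fun ε _ => aux_enorm_rpow hp0.le _
    _ ≤ ENNReal.ofReal (2 ^ n * (c ^ p * ∑ i, ‖x i‖ ^ p)) :=
        ENNReal.ofReal_le_ofReal (hreal n x)
    _ = 2 ^ n * (ENNReal.ofReal (c ^ p) * ∑ i, (‖x i‖₊ : ℝ≥0∞) ^ p) := by
        rw [ENNReal.ofReal_mul (by positivity), ENNReal.ofReal_mul (by positivity),
          ENNReal.ofReal_pow (by norm_num), ENNReal.ofReal_ofNat,
          ENNReal.ofReal_sum_of_nonneg fun i _ => Real.rpow_nonneg (norm_nonneg _) p]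
        congr 1
        congr 1
        exact Finset.sum_congr rfl fun i _ => (aux_enorm_rpow hp0.le _).symm

lemma aux_core {B : Type*} [NormedAddCommGroup B] [NormedSpace ℝ B] [CompleteSpace B]
    [MeasurableSpace B] [BorelSpace B] [SecondCountableTopology B]
    {p c : ℝ} (hp : 1 ≤ p) (hc : 0 < c)
    (hreal : ∀ (n : ℕ) (x : Fin n → B),
      ∑ ε : Fin n → Bool, ‖∑ i, (if ε i then x i else -x i)‖ ^ p
        ≤ 2 ^ n * (c ^ p * ∑ i, ‖x i‖ ^ p))
    (n : ℕ) (ν : Fin n → Measure B) [∀ i, IsProbabilityMeasure (ν i)]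
    (hint : ∀ i, Integrable (id : B → B) (ν i))
    (hmean : ∀ i, ∫ b, b ∂(ν i) = 0) :
    ∫⁻ x, (‖∑ i, x i‖₊ : ℝ≥0∞) ^ p ∂(Measure.pi ν)
      ≤ ENNReal.ofReal (c ^ p) * (2 ^ p * 2) * ∑ i, ∫⁻ b, (‖b‖₊ : ℝ≥0∞) ^ p ∂(ν i) := by
  have hp0 : (0:ℝ) < p := lt_of_lt_of_le one_pos hp
  set π := Measure.pi ν with hπ
  set κ := Measure.pi (fun i => (ν i).prod (ν i)) with hκ
  -- measurability of main integrands
  have hG : Measurable fun xy : (Fin n → B) × (Fin n → B) =>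
      (‖∑ i, (xy.1 i - xy.2 i)‖₊ : ℝ≥0∞) ^ p := by
    have h : Measurable fun xy : (Fin n → B) × (Fin n → B) => ∑ i, (xy.1 i - xy.2 i) :=
      Finset.measurable_sum _ fun i _ =>
        ((measurable_pi_apply i).comp measurable_fst).sub
          ((measurable_pi_apply i).comp measurable_snd)
    exact (h.nnnorm.coe_nnreal_ennreal).pow_const _
  have hH : Measurable fun q : Fin n → B × B =>
      (‖∑ i, ((q i).1 - (q i).2)‖₊ : ℝ≥0∞) ^ p := by
    have h : Measurable fun q : Fin n → B × B => ∑ i, ((q i).1 - (q i).2) :=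
      Finset.measurable_sum _ fun i _ =>
        ((measurable_pi_apply i).fst).sub ((measurable_pi_apply i).snd)
    exact (h.nnnorm.coe_nnreal_ennreal).pow_const _
  have hHε : ∀ ε : Fin n → Bool, Measurable fun q : Fin n → B × B =>
      (‖∑ i, (if ε i then ((q i).1 - (q i).2) else -((q i).1 - (q i).2))‖₊ : ℝ≥0∞) ^ p := by
    intro ε
    have h : Measurable fun q : Fin n → B × B =>
        ∑ i, (if ε i then ((q i).1 - (q i).2) else -((q i).1 - (q i).2)) := by
      refine Finset.measurable_sum _ fun i _ => ?_
      have h1 : Measurable fun q : Fin n → B × B => (q i).1 - (q i).2 :=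
        ((measurable_pi_apply i).fst).sub ((measurable_pi_apply i).snd)
      by_cases hb : ε i = true
      · simpa [hb] using h1
      · simp only [hb, ↓reduceIte]; exact h1.neg
    exact (h.nnnorm.coe_nnreal_ennreal).pow_const _
  -- integrability and mean-zero of coordinates under π
  have hmpev : ∀ i, MeasurePreserving (Function.eval i) π (ν i) :=
    fun i => ⟨measurable_pi_apply i, aux_map_eval_pi ν i⟩
  have hintπ : ∀ i, Integrable (fun y : Fin n → B => y i) π := fun i =>
    ((hmpev i).integrable_comp aestronglyMeasurable_id).mpr (hint i)
  have hmeanπ : ∀ i, ∫ y, y i ∂π = 0 := by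
    intro i
    have h1 : ∫ b, b ∂(ν i) = ∫ y, y i ∂π := by
      rw [← aux_map_eval_pi ν i]
      exact integral_map (φ := (Function.eval i : (Fin n → B) → B)) (f := fun b : B => b)
        (measurable_pi_apply i).aemeasurable measurable_id.aestronglyMeasurable
    rw [← h1]; exact hmean i
  -- pointwise Jensen
  have stepA_pt : ∀ x : Fin n → B, (‖∑ i, x i‖₊ : ℝ≥0∞) ^ p
      ≤ ∫⁻ y, (‖∑ i, (x i - y i)‖₊ : ℝ≥0∞) ^ p ∂π := by
    intro x
    have hfm : Measurable fun y : Fin n → B => ∑ i, (x i - y i) :=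
      Finset.measurable_sum _ fun i _ => measurable_const.sub (measurable_pi_apply i)
    have hi : ∀ i, Integrable (fun y : Fin n → B => x i - y i) π :=
      fun i => (integrable_const (x i)).sub (hintπ i)
    have hrepr : ∑ i, x i = ∫ y, (∑ i, (x i - y i)) ∂π := by
      rw [integral_finset_sum _ (fun i _ => hi i)]
      refine (Finset.sum_congr rfl fun i _ => ?_).symm
      rw [integral_sub (integrable_const _) (hintπ i), integral_const, probReal_univ, one_smul,
        hmeanπ i, sub_zero]
    rw [hrepr]
    exact aux_jensen π hp hfm.aestronglyMeasurable
  -- Step A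
  have stepA : ∫⁻ x, (‖∑ i, x i‖₊ : ℝ≥0∞) ^ p ∂π
      ≤ ∫⁻ xy, (‖∑ i, (xy.1 i - xy.2 i)‖₊ : ℝ≥0∞) ^ p ∂(π.prod π) := by
    rw [lintegral_prod _ hG.aemeasurable]
    exact lintegral_mono fun x => stepA_pt x
  -- transfer to κ
  have hePres := measurePreserving_arrowProdEquivProdArrow B B (Fin n) ν ν
  have stepE : ∫⁻ xy, (‖∑ i, (xy.1 i - xy.2 i)‖₊ : ℝ≥0∞) ^ p ∂(π.prod π)
      = ∫⁻ q, (‖∑ i, ((q i).1 - (q i).2)‖₊ : ℝ≥0∞) ^ p ∂κ :=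
    (hePres.lintegral_comp hG).symm
  -- symmetrization
  have hSε : ∀ ε : Fin n → Bool, MeasurePreserving
      (fun q : Fin n → B × B => fun i => (fun y : B × B => if ε i then y else y.swap) (q i)) κ κ := by
    intro ε
    refine measurePreserving_pi (fun i => (ν i).prod (ν i)) (fun i => (ν i).prod (ν i))
      (f := fun i (y : B × B) => if ε i then y else y.swap) (fun i => ?_)
    by_cases hb : ε i = true
    · simp only [hb, ↓reduceIte]; exact MeasurePreserving.id ((ν i).prod (ν i))
    · simpa [hb] using (Measure.measurePreserving_swap (μ := ν i) (ν := ν i))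
  have stepB : ∀ ε : Fin n → Bool,
      ∫⁻ q, (‖∑ i, ((q i).1 - (q i).2)‖₊ : ℝ≥0∞) ^ p ∂κ
        = ∫⁻ q, (‖∑ i, (if ε i then ((q i).1 - (q i).2)
            else -((q i).1 - (q i).2))‖₊ : ℝ≥0∞) ^ p ∂κ := by
    intro ε
    rw [← (hSε ε).lintegral_comp hH]
    refine lintegral_congr fun q => ?_
    have : ∑ i, (((fun i => (fun y : B × B => if ε i then y else y.swap) (q i)) i).1
          - ((fun i => (fun y : B × B => if ε i then y else y.swap) (q i)) i).2)
        = ∑ i, (if ε i then ((q i).1 - (q i).2) else -((q i).1 - (q i).2)) := by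
      refine Finset.sum_congr rfl fun i _ => ?_
      by_cases hb : ε i = true
      · simp [hb]
      · simp [hb, Prod.swap, neg_sub]
    simp only [this]
  -- sum over sign patterns
  have hcard : (Fintype.card (Fin n → Bool)) = 2 ^ n := by simp
  have stepBB : (2 ^ n : ℝ≥0∞) * ∫⁻ q, (‖∑ i, ((q i).1 - (q i).2)‖₊ : ℝ≥0∞) ^ p ∂κ
      ≤ (2 ^ n : ℝ≥0∞) * (ENNReal.ofReal (c ^ p)
          * ∑ i, ∫⁻ q, (‖(q i).1 - (q i).2‖₊ : ℝ≥0∞) ^ p ∂κ) := by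
    calc (2 ^ n : ℝ≥0∞) * ∫⁻ q, (‖∑ i, ((q i).1 - (q i).2)‖₊ : ℝ≥0∞) ^ p ∂κ
        = ∑ _ε : Fin n → Bool, ∫⁻ q, (‖∑ i, ((q i).1 - (q i).2)‖₊ : ℝ≥0∞) ^ p ∂κ := by
          rw [Finset.sum_const, Finset.card_univ, hcard, nsmul_eq_mul]
          push_cast
          ring
      _ = ∑ ε : Fin n → Bool, ∫⁻ q, (‖∑ i, (if ε i then ((q i).1 - (q i).2)
            else -((q i).1 - (q i).2))‖₊ : ℝ≥0∞) ^ p ∂κ :=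
          Finset.sum_congr rfl fun ε _ => stepB ε
      _ = ∫⁻ q, ∑ ε : Fin n → Bool, (‖∑ i, (if ε i then ((q i).1 - (q i).2)
            else -((q i).1 - (q i).2))‖₊ : ℝ≥0∞) ^ p ∂κ :=
          (lintegral_finset_sum _ fun ε _ => hHε ε).symm
      _ ≤ ∫⁻ q, 2 ^ n * (ENNReal.ofReal (c ^ p)
            * ∑ i, (‖(q i).1 - (q i).2‖₊ : ℝ≥0∞) ^ p) ∂κ :=
          lintegral_mono fun q =>
            aux_type_ennreal hp hc hreal n (fun i => (q i).1 - (q i).2)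
      _ = (2 ^ n : ℝ≥0∞) * (ENNReal.ofReal (c ^ p)
            * ∑ i, ∫⁻ q, (‖(q i).1 - (q i).2‖₊ : ℝ≥0∞) ^ p ∂κ) := by
          rw [lintegral_const_mul _ (by
            refine Measurable.const_mul ?_ _
            refine Finset.measurable_sum _ fun i _ => ?_
            exact ((((measurable_pi_apply i).fst).sub
              ((measurable_pi_apply i).snd)).nnnorm.coe_nnreal_ennreal).pow_const _)]
          congr 1
          rw [lintegral_const_mul _ (by
            refine Finset.measurable_sum _ fun i _ => ?_
            exact ((((measurable_pi_apply i).fst).sub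
              ((measurable_pi_apply i).snd)).nnnorm.coe_nnreal_ennreal).pow_const _)]
          congr 1
          exact lintegral_finset_sum _ fun i _ =>
            ((((measurable_pi_apply i).fst).sub
              ((measurable_pi_apply i).snd)).nnnorm.coe_nnreal_ennreal).pow_const _
  have hcancel : ∫⁻ q, (‖∑ i, ((q i).1 - (q i).2)‖₊ : ℝ≥0∞) ^ p ∂κ
      ≤ ENNReal.ofReal (c ^ p) * ∑ i, ∫⁻ q, (‖(q i).1 - (q i).2‖₊ : ℝ≥0∞) ^ p ∂κ :=
    (ENNReal.mul_le_mul_iff_right (by positivity) (by simp)).mp stepBB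
  -- per-coordinate bound
  have stepC : ∀ i, ∫⁻ q, (‖(q i).1 - (q i).2‖₊ : ℝ≥0∞) ^ p ∂κ
      ≤ (2 : ℝ≥0∞) ^ p * 2 * ∫⁻ b, (‖b‖₊ : ℝ≥0∞) ^ p ∂(ν i) := by
    intro i
    have hevalmp : MeasurePreserving (Function.eval i) κ ((ν i).prod (ν i)) :=
      ⟨measurable_pi_apply i, aux_map_eval_pi _ i⟩
    have hnm : Measurable fun b : B => (‖b‖₊ : ℝ≥0∞) ^ p :=
      (measurable_nnnorm.coe_nnreal_ennreal).pow_const _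
    have hfstmp : MeasurePreserving (Prod.fst : B × B → B) ((ν i).prod (ν i)) (ν i) :=
      ⟨measurable_fst, by simp⟩
    have hsndmp : MeasurePreserving (Prod.snd : B × B → B) ((ν i).prod (ν i)) (ν i) :=
      ⟨measurable_snd, by simp⟩
    have hgm : Measurable fun z : B × B => (‖z.1 - z.2‖₊ : ℝ≥0∞) ^ p :=
      (((measurable_fst.sub measurable_snd)).nnnorm.coe_nnreal_ennreal).pow_const _
    calc ∫⁻ q, (‖(q i).1 - (q i).2‖₊ : ℝ≥0∞) ^ p ∂κ
        = ∫⁻ z, (‖z.1 - z.2‖₊ : ℝ≥0∞) ^ p ∂((ν i).prod (ν i)) :=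
          hevalmp.lintegral_comp hgm
      _ ≤ ∫⁻ z, 2 ^ p * ((‖z.1‖₊ : ℝ≥0∞) ^ p + (‖z.2‖₊ : ℝ≥0∞) ^ p) ∂((ν i).prod (ν i)) :=
          lintegral_mono fun z => aux_sub_bound hp0.le _ _
      _ = 2 ^ p * (∫⁻ z, (‖z.1‖₊ : ℝ≥0∞) ^ p ∂((ν i).prod (ν i))
            + ∫⁻ z, (‖z.2‖₊ : ℝ≥0∞) ^ p ∂((ν i).prod (ν i))) := by
          have hm1 : Measurable fun z : B × B => (‖z.1‖₊ : ℝ≥0∞) ^ p :=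
            ((measurable_fst.nnnorm).coe_nnreal_ennreal).pow_const _
          have hm2 : Measurable fun z : B × B => (‖z.2‖₊ : ℝ≥0∞) ^ p :=
            ((measurable_snd.nnnorm).coe_nnreal_ennreal).pow_const _
          rw [lintegral_const_mul (f := fun z : B × B => (‖z.1‖₊ : ℝ≥0∞) ^ p + (‖z.2‖₊ : ℝ≥0∞) ^ p) _ (hm1.add hm2), lintegral_add_left hm1]
      _ = 2 ^ p * (∫⁻ b, (‖b‖₊ : ℝ≥0∞) ^ p ∂(ν i) + ∫⁻ b, (‖b‖₊ : ℝ≥0∞) ^ p ∂(ν i)) := by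
          rw [hfstmp.lintegral_comp hnm, hsndmp.lintegral_comp hnm]
      _ = (2 : ℝ≥0∞) ^ p * 2 * ∫⁻ b, (‖b‖₊ : ℝ≥0∞) ^ p ∂(ν i) := by ring
  -- assemble
  calc ∫⁻ x, (‖∑ i, x i‖₊ : ℝ≥0∞) ^ p ∂π
      ≤ ∫⁻ xy, (‖∑ i, (xy.1 i - xy.2 i)‖₊ : ℝ≥0∞) ^ p ∂(π.prod π) := stepA
    _ = ∫⁻ q, (‖∑ i, ((q i).1 - (q i).2)‖₊ : ℝ≥0∞) ^ p ∂κ := stepE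
    _ ≤ ENNReal.ofReal (c ^ p) * ∑ i, ∫⁻ q, (‖(q i).1 - (q i).2‖₊ : ℝ≥0∞) ^ p ∂κ := hcancel
    _ ≤ ENNReal.ofReal (c ^ p) * ∑ i, ((2 : ℝ≥0∞) ^ p * 2 * ∫⁻ b, (‖b‖₊ : ℝ≥0∞) ^ p ∂(ν i)) := by
        gcongr with i
        exact stepC i
    _ = ENNReal.ofReal (c ^ p) * (2 ^ p * 2) * ∑ i, ∫⁻ b, (‖b‖₊ : ℝ≥0∞) ^ p ∂(ν i) := by
        rw [← Finset.mul_sum]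
        ring

/-- If `1 ≤ p ≤ 2` and `B` is a real separable Banach space of Rademacher
type `p`, then there is a constant `c(p) > 0` such that for every finite sequence
`(X_1,…,X_n)` of independent mean-zero `B`-valued random variables with `E‖X_i‖^p < ∞`,
`E‖∑ X_i‖^p ≤ c(p) ∑ E‖X_i‖^p`. -/
theorem rademacher_type_moment_inequality
    {B : Type*} [NormedAddCommGroup B] [NormedSpace ℝ B] [CompleteSpace B]
    [TopologicalSpace.SeparableSpace B] [MeasurableSpace B] [BorelSpace B]
    (p : ℝ) (hp1 : 1 ≤ p) (hp2 : p ≤ 2)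
    (hB : IsRademacherType B p) :
    ∃ c > (0 : ℝ), ∀ (Ω : Type) (_ : MeasurableSpace Ω) (μ : Measure Ω),
      IsProbabilityMeasure μ →
      ∀ (n : ℕ) (X : Fin n → Ω → B),
        (∀ i, Measurable (X i)) →
        (∀ i, MemLp (X i) (ENNReal.ofReal p) μ) →
        (∀ i, ∫ ω, X i ω ∂μ = 0) →
        iIndepFun X μ →
        ∫ ω, ‖∑ i, X i ω‖ ^ p ∂μ ≤ c * ∑ i, ∫ ω, ‖X i ω‖ ^ p ∂μ := by
  obtain ⟨c, hc, hty⟩ := hB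
  have hp0 : (0:ℝ) < p := lt_of_lt_of_le one_pos hp1
  haveI : SecondCountableTopology B := UniformSpace.secondCountable_of_separable B
  have hreal := aux_type_real hp1 hc hty
  set K : ℝ≥0∞ := ENNReal.ofReal (c ^ p) * (2 ^ p * 2) with hK
  have hKtop : K ≠ ∞ := by
    refine ENNReal.mul_ne_top ENNReal.ofReal_ne_top (ENNReal.mul_ne_top ?_ (by norm_num))
    exact ENNReal.rpow_ne_top_of_nonneg hp0.le (by norm_num)
  have hKpos : 0 < K := by
    refine ENNReal.mul_pos ?_ ?_
    · simpa [ENNReal.ofReal_eq_zero, not_le] using Real.rpow_pos_of_pos hc p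
    · exact mul_ne_zero (ENNReal.rpow_pos (by norm_num) (by norm_num)).ne' two_ne_zero
  refine ⟨K.toReal, ENNReal.toReal_pos hKpos.ne' hKtop, ?_⟩
  intro Ω mΩ μ hμ n X hXm hXp hX0 hXind
  set ν : Fin n → Measure B := fun i => μ.map (X i) with hν
  haveI hνprob : ∀ i, IsProbabilityMeasure (ν i) := fun i =>
    Measure.isProbabilityMeasure_map (hXm i).aemeasurable
  have hφm : Measurable (fun ω => fun i => X i ω) := measurable_pi_lambda _ hXm
  have hmap : μ.map (fun ω i => X i ω) = Measure.pi ν := by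
    refine (Measure.pi_eq fun s hs => ?_).symm
    rw [Measure.map_apply hφm (MeasurableSet.univ_pi hs)]
    have hpre : (fun ω i => X i ω) ⁻¹' (Set.univ.pi s) = ⋂ i ∈ Finset.univ, X i ⁻¹' s i := by
      ext ω; simp [Set.mem_pi]
    rw [hpre, hXind.measure_inter_preimage_eq_mul Finset.univ (fun i _ => hs i)]
    exact Finset.prod_congr rfl fun i _ => (Measure.map_apply (hXm i) (hs i)).symm
  have hintX : ∀ i, Integrable (X i) μ := fun i =>
    (hXp i).integrable (ENNReal.one_le_ofReal.mpr hp1)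
  have hint : ∀ i, Integrable (id : B → B) (ν i) := fun i =>
    (integrable_map_measure measurable_id.aestronglyMeasurable (hXm i).aemeasurable).mpr
      (hintX i)
  have hmean : ∀ i, ∫ b, b ∂(ν i) = 0 := fun i => by
    show ∫ b, b ∂(μ.map (X i)) = 0
    rw [integral_map (f := fun b : B => b) (hXm i).aemeasurable
      measurable_id.aestronglyMeasurable]
    exact hX0 i
  -- measurable integrands
  have hnm : Measurable fun b : B => (‖b‖₊ : ℝ≥0∞) ^ p :=
    (measurable_nnnorm.coe_nnreal_ennreal).pow_const _
  have hsm : Measurable fun x : Fin n → B => (‖∑ i, x i‖₊ : ℝ≥0∞) ^ p := by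
    have h : Measurable fun x : Fin n → B => ∑ i, x i :=
      Finset.measurable_sum _ fun i _ => measurable_pi_apply i
    exact (h.nnnorm.coe_nnreal_ennreal).pow_const _
  set m : Fin n → ℝ≥0∞ := fun i => ∫⁻ ω, (‖X i ω‖₊ : ℝ≥0∞) ^ p ∂μ with hm
  have hmfin : ∀ i, m i ≠ ∞ := by
    intro i
    have h := (hXp i).2
    rw [eLpNorm_eq_lintegral_rpow_enorm_toReal (by simp [ENNReal.ofReal_eq_zero]; linarith)
      ENNReal.ofReal_ne_top, ENNReal.toReal_ofReal hp0.le] at h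
    simp only [enorm_eq_nnnorm] at h
    have h2 : (∫⁻ ω, (‖X i ω‖₊ : ℝ≥0∞) ^ p ∂μ) ≠ ∞ := by
      intro htop
      rw [htop] at h
      simp [ENNReal.top_rpow_of_pos (show (0:ℝ) < p⁻¹ by positivity)] at h
    exact h2
  -- Bochner integrals as lintegrals
  have hL : ∫ ω, ‖∑ i, X i ω‖ ^ p ∂μ = (∫⁻ ω, (‖∑ i, X i ω‖₊ : ℝ≥0∞) ^ p ∂μ).toReal := by
    have hsmX : Measurable fun ω => ∑ i, X i ω := Finset.measurable_sum _ fun i _ => hXm i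
    rw [integral_eq_lintegral_of_nonneg_ae
      (Filter.Eventually.of_forall fun ω => Real.rpow_nonneg (norm_nonneg _) p)
      ((hsmX.norm.pow measurable_const).aestronglyMeasurable)]
    congr 1
    exact lintegral_congr fun ω => (aux_enorm_rpow hp0.le _).symm
  have hRi : ∀ i, ∫ ω, ‖X i ω‖ ^ p ∂μ = (m i).toReal := by
    intro i
    rw [integral_eq_lintegral_of_nonneg_ae
      (Filter.Eventually.of_forall fun ω => Real.rpow_nonneg (norm_nonneg _) p)
      (((hXm i).norm.pow measurable_const).aestronglyMeasurable)]
    congr 1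
    exact lintegral_congr fun ω => (aux_enorm_rpow hp0.le _).symm
  -- transfer lintegrals to canonical space
  have htrans : ∫⁻ ω, (‖∑ i, X i ω‖₊ : ℝ≥0∞) ^ p ∂μ
      = ∫⁻ x, (‖∑ i, x i‖₊ : ℝ≥0∞) ^ p ∂(Measure.pi ν) := by
    rw [← hmap, lintegral_map hsm hφm]
  have htransi : ∀ i, m i = ∫⁻ b, (‖b‖₊ : ℝ≥0∞) ^ p ∂(ν i) := fun i =>
    (lintegral_map hnm (hXm i)).symm
  have hcore := aux_core hp1 hc hreal n ν hint hmean
  have hmain : ∫⁻ ω, (‖∑ i, X i ω‖₊ : ℝ≥0∞) ^ p ∂μ ≤ K * ∑ i, m i := by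
    rw [htrans, hK]
    refine hcore.trans (le_of_eq ?_)
    congr 1
    exact (Finset.sum_congr rfl fun i _ => (htransi i).symm)
  have hsumfin : ∑ i, m i ≠ ∞ := ENNReal.sum_ne_top.mpr fun i _ => hmfin i
  have hfinal : (∫⁻ ω, (‖∑ i, X i ω‖₊ : ℝ≥0∞) ^ p ∂μ).toReal ≤ K.toReal * ∑ i, (m i).toReal := by
    have := ENNReal.toReal_mono (ENNReal.mul_ne_top hKtop hsumfin) hmain
    rwa [ENNReal.toReal_mul, ENNReal.toReal_sum fun i _ => hmfin i] at this
  rw [hL]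
  have hsumeq : ∑ i, ∫ ω, ‖X i ω‖ ^ p ∂μ = ∑ i, (m i).toReal :=
    Finset.sum_congr rfl fun i _ => hRi i
  rw [hsumeq]
  exact hfinal
end
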